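/- arXiv:1510.01868 — 11 statements merged into one kernel-verified Lean document; each statement's English description precedes it below -/
import Mathlib

section
/- Let U be a semigroup and S a subsemigroup of U. If x and y are regular elements of S, then x and y are K-related in U if and only if they are K-related in S, where K is any of Green's relations R, L, or H. -/
variable {U : Type*}

/-- Green's R-relation relative to a set `T` of multipliers (`T = S` gives `R^S`,
`T = Set.univ` gives `R^U`): `x R y` iff `x ∈ y T^1` and `y ∈ x T^1`. -/
def GreenR [Mul U] (T : Set U) (x y : U) : Prop :=
  (x = y ∨ ∃ a ∈ T, x * a = y) ∧ (y = x ∨ ∃ a ∈ T, y * a = x)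

/-- Green's L-relation relative to a set `T` of multipliers. -/
def GreenL [Mul U] (T : Set U) (x y : U) : Prop :=
  (x = y ∨ ∃ a ∈ T, a * x = y) ∧ (y = x ∨ ∃ a ∈ T, a * y = x)

/-- Green's H-relation relative to `T`. -/
def GreenH [Mul U] (T : Set U) (x y : U) : Prop :=
  GreenL T x y ∧ GreenR T x y

/-- Green's D-relation relative to `T` (for finite semigroups, `D = R ∘ L`). -/
def GreenD [Mul U] (T : Set U) (x y : U) : Prop :=
  ∃ z, GreenR T x z ∧ GreenL T z y

/-- The `L^U`-class of `x` in the ambient semigroup `U`. -/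
def Lcl [Mul U] (x : U) : Set U := {y | GreenL Set.univ x y}

/-- The `R^U`-class of `x` in the ambient semigroup `U`. -/
def RclU [Mul U] (x : U) : Set U := {y | GreenR Set.univ x y}

/-- The `R`-class of `x` relative to multipliers from `T`. -/
def Rcl [Mul U] (T : Set U) (x : U) : Set U := {y | GreenR T x y}

/-- `L_a^U` reaches `L_b^U` under the right action of `T^1` on `L^U`-classes
given by `L_a · s = L_{a s}`. -/
def reachC [Mul U] (T : Set U) (a b : U) : Prop :=
  Lcl a = Lcl b ∨ ∃ s ∈ T, Lcl (a * s) = Lcl b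

/-- `R_a^U` reaches `R_b^U` under the left action of `T^1` on `R^U`-classes. -/
def reachCL [Mul U] (T : Set U) (a b : U) : Prop :=
  RclU a = RclU b ∨ ∃ s ∈ T, RclU (s * a) = RclU b

/-- The right action of `S^1` (identity adjoined, encoded as `Option ↥S`) on `U`. -/
def act1 [Mul U] (S : Subsemigroup U) (u : U) (o : Option ↥S) : U :=
  o.elim u (fun s => u * (s : U))

/-- The left action of `S^1` on `U`. -/
def act1L [Mul U] (S : Subsemigroup U) (o : Option ↥S) (u : U) : U :=
  o.elim u (fun s => (s : U) * u)

/-- The stabiliser `Stab_S(L_x^U)` of the `L^U`-class of `x` under the right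
action of `S^1` on subsets of `U`. -/
def StabOfL [Mul U] (S : Subsemigroup U) (x : U) : Set (Option ↥S) :=
  {o | (fun y => act1 S y o) '' Lcl x = Lcl x}

/-- The stabiliser `Stab_S(R_x^U)` of the `R^U`-class of `x` under the left
action of `S^1` on subsets of `U`. -/
def StabOfR [Mul U] (S : Subsemigroup U) (x : U) : Set (Option ↥S) :=
  {o | (fun y => act1L S o y) '' RclU x = RclU x}

private lemma auxR [Semigroup U] (S : Subsemigroup U) {x y : U} (hy : y ∈ S)
    (hxreg : ∃ x' ∈ S, x * x' * x = x)
    (h : x = y ∨ ∃ a ∈ (Set.univ : Set U), x * a = y) :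
    x = y ∨ ∃ a ∈ (S : Set U), x * a = y := by
  rcases h with h | ⟨a, -, ha⟩
  · exact Or.inl h
  · obtain ⟨x', hx', hxx⟩ := hxreg
    refine Or.inr ⟨x' * y, S.mul_mem hx' hy, ?_⟩
    rw [← ha, ← mul_assoc, ← mul_assoc, hxx]

private lemma auxL [Semigroup U] (S : Subsemigroup U) {x y : U} (hy : y ∈ S)
    (hxreg : ∃ x' ∈ S, x * x' * x = x)
    (h : x = y ∨ ∃ a ∈ (Set.univ : Set U), a * x = y) :
    x = y ∨ ∃ a ∈ (S : Set U), a * x = y := by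
  rcases h with h | ⟨a, -, ha⟩
  · exact Or.inl h
  · obtain ⟨x', hx', hxx⟩ := hxreg
    refine Or.inr ⟨y * x', S.mul_mem hy hx', ?_⟩
    rw [← ha, mul_assoc a x x', mul_assoc a (x*x') x, hxx]

/-- If `x` and `y` are regular elements of a subsemigroup `S` of a semigroup `U`,
then `x K^U y ↔ x K^S y` for `K` any of Green's relations `R`, `L`, `H`. -/
theorem greens_relations_of_regular_subsemigroup [Semigroup U] (S : Subsemigroup U)
    (x y : U) (hx : x ∈ S) (hy : y ∈ S)
    (hxreg : ∃ x' ∈ S, x * x' * x = x) (hyreg : ∃ y' ∈ S, y * y' * y = y) :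
    (GreenR (Set.univ : Set U) x y ↔ GreenR (S : Set U) x y) ∧
    (GreenL (Set.univ : Set U) x y ↔ GreenL (S : Set U) x y) ∧
    (GreenH (Set.univ : Set U) x y ↔ GreenH (S : Set U) x y) := by
  have hR : GreenR (Set.univ : Set U) x y ↔ GreenR (S : Set U) x y := by
    constructor
    · rintro ⟨h1, h2⟩
      exact ⟨auxR S hy hxreg h1, auxR S hx hyreg h2⟩
    · rintro ⟨h1, h2⟩
      refine ⟨?_, ?_⟩
      · rcases h1 with h | ⟨a, -, ha⟩
        exacts [Or.inl h, Or.inr ⟨a, trivial, ha⟩]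
      · rcases h2 with h | ⟨a, -, ha⟩
        exacts [Or.inl h, Or.inr ⟨a, trivial, ha⟩]
  have hL : GreenL (Set.univ : Set U) x y ↔ GreenL (S : Set U) x y := by
    constructor
    · rintro ⟨h1, h2⟩
      exact ⟨auxL S hy hxreg h1, auxL S hx hyreg h2⟩
    · rintro ⟨h1, h2⟩
      refine ⟨?_, ?_⟩
      · rcases h1 with h | ⟨a, -, ha⟩
        exacts [Or.inl h, Or.inr ⟨a, trivial, ha⟩]
      · rcases h2 with h | ⟨a, -, ha⟩
        exacts [Or.inl h, Or.inr ⟨a, trivial, ha⟩]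
  exact ⟨hR, hL, and_congr hL hR⟩
end

section
/- Let S be a semigroup acting on the right on a finite set Ω, and consider the induced action on subsets of Ω. If Σ₁ and Σ₂ are subsets of Ω in the same strongly connected component of this action (i.e. each is an image of the other under elements of S^1), and u ∈ S^1 satisfies Σ₁·u = Σ₂, then there exists v ∈ S^1 such that Σ₂·v = Σ₁, the map u restricted to Σ₁ followed by v restricted to Σ₂ is the identity on Σ₁, and v restricted to Σ₂ followed by u restricted to Σ₁ is the identity on Σ₂. -/
/-- Variant of Schreier's theorem for semigroup actions (Proposition on strongly
connected components): if a monoid `M` (playing the role of `S^1`) acts on the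
right on a finite set `Ω` via `act`, and the subsets `Sig1`, `Sig2` lie in the same
strongly connected component of the induced action on subsets, then for any
`u ∈ M` with `Sig1 · u = Sig2` there is `v ∈ M` with `Sig2 · v = Sig1` such that
`u|_{Sig1} ∘ v|_{Sig2} = id_{Sig1}` and `v|_{Sig2} ∘ u|_{Sig1} = id_{Sig2}`. -/
theorem exists_inverse_on_scc {M Ω : Type*} [Monoid M] [Finite Ω]
    (act : Ω → M → Ω)
    (hone : ∀ α, act α 1 = α)
    (hmul : ∀ α s t, act (act α s) t = act α (s * t))
    (Sig1 Sig2 : Set Ω)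
    (hscc : ∃ s t : M, (fun α => act α s) '' Sig1 = Sig2 ∧ (fun α => act α t) '' Sig2 = Sig1)
    (u : M) (hu : (fun α => act α u) '' Sig1 = Sig2) :
    ∃ v : M, (fun α => act α v) '' Sig2 = Sig1 ∧
      (∀ α ∈ Sig1, act (act α u) v = α) ∧
      (∀ β ∈ Sig2, act (act β v) u = β) := by
  obtain ⟨s0, t, _, ht⟩ := hscc
  set s := u * t with hs
  have himg : (fun α => act α s) '' Sig1 = Sig1 := by
    have h1 : (fun α => act α s) '' Sig1 = (fun α => act α t) '' ((fun α => act α u) '' Sig1) := by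
      rw [Set.image_image]
      simp only [hmul, hs]
    rw [h1, hu, ht]
  -- image of Sig1 under s^k is Sig1
  have himgk : ∀ k : ℕ, (fun α => act α (s ^ k)) '' Sig1 = Sig1 := by
    intro k
    induction k with
    | zero => simp [hone]
    | succ k ih =>
      have : (fun α => act α (s ^ (k + 1))) '' Sig1
          = (fun α => act α s) '' ((fun α => act α (s ^ k)) '' Sig1) := by
        rw [Set.image_image]
        simp only [hmul, ← pow_succ]
      rw [this, ih, himg]
  have hmem : ∀ α ∈ Sig1, act α s ∈ Sig1 := by
    intro α hα
    rw [← himg]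
    exact ⟨α, hα, rfl⟩
  -- the restriction of s to Sig1 as a bijection
  have hsurj : Function.Surjective (fun x : Sig1 => (⟨act x s, hmem x x.2⟩ : Sig1)) := by
    rintro ⟨y, hy⟩
    rw [← himg] at hy
    obtain ⟨α, hα, hαy⟩ := hy
    exact ⟨⟨α, hα⟩, Subtype.ext hαy⟩
  have hbij : Function.Bijective (fun x : Sig1 => (⟨act x s, hmem x x.2⟩ : Sig1)) :=
    Finite.surjective_iff_bijective.mp hsurj
  set e : Equiv.Perm Sig1 := Equiv.ofBijective _ hbij with he
  have hpow : ∀ (k : ℕ) (x : Sig1), (((e ^ k) x : Sig1) : Ω) = act (x : Ω) (s ^ k) := by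
    intro k
    induction k with
    | zero => intro x; simp [hone]
    | succ k ih =>
      intro x
      have : (e ^ (k + 1)) x = (e ^ k) (e x) := by
        rw [pow_succ, Equiv.Perm.mul_apply]
      rw [this, ih]
      show act (act (x : Ω) s) (s ^ k) = act (x : Ω) (s ^ (k + 1))
      rw [hmul, ← pow_succ']
  have hn : 0 < orderOf e := orderOf_pos e
  have hfix : ∀ α ∈ Sig1, act α (s ^ orderOf e) = α := by
    intro α hα
    have := hpow (orderOf e) ⟨α, hα⟩
    rw [pow_orderOf_eq_one, Equiv.Perm.coe_one, id_eq] at this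
    exact this.symm
  refine ⟨t * s ^ (orderOf e - 1), ?_, ?_, ?_⟩
  · have h1 : (fun β => act β (t * s ^ (orderOf e - 1))) '' Sig2
        = (fun α => act α (s ^ (orderOf e - 1))) '' ((fun β => act β t) '' Sig2) := by
      rw [Set.image_image]
      simp only [hmul]
    rw [h1, ht, himgk]
  · intro α hα
    rw [hmul, ← mul_assoc, ← hs, ← pow_succ', Nat.sub_add_cancel hn]
    exact hfix α hα
  · intro β hβ
    rw [← hu] at hβ
    obtain ⟨α, hα, rfl⟩ := hβ
    have h1 : act (act α u) (t * s ^ (orderOf e - 1)) = α := by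
      rw [hmul, ← mul_assoc, ← hs, ← pow_succ', Nat.sub_add_cancel hn]
      exact hfix α hα
    rw [h1]
end

section
/- Let U be a finite semigroup and S a subsemigroup of U. For x ∈ S and s ∈ S^1: the L^U-classes L_x and L_{xs} lie in the same strongly connected component of the right action of S on U/L^U if and only if x R^S xs. -/
variable {U : Type*}

private lemma key0' [Semigroup U] [Finite U] (u w x : U) (h : u * (x * w) = x) :
    ∃ d : ℕ, 1 ≤ d ∧ (fun z => z * w)^[d] x = x := by
  set f : U → U := fun z => z * w with hf
  set g : U → U := fun z => u * z with hg
  have comm : ∀ z, g (f z) = f (g z) := fun z => (mul_assoc u z w).symm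
  have commIt : ∀ (m : ℕ) z, g^[m] (f z) = f (g^[m] z) := by
    intro m
    induction m with
    | zero => intro z; rfl
    | succ m ih =>
      intro z
      rw [Function.iterate_succ_apply', Function.iterate_succ_apply', ih, comm]
  have commIt2 : ∀ (m k : ℕ) z, g^[m] (f^[k] z) = f^[k] (g^[m] z) := by
    intro m k
    induction k with
    | zero => intro z; rfl
    | succ k ih =>
      intro z
      rw [Function.iterate_succ_apply', Function.iterate_succ_apply', commIt, ih]
  have claim : ∀ k : ℕ, g^[k] (f^[k] x) = x := by
    intro k
    induction k with
    | zero => rfl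
    | succ k ih =>
      rw [Function.iterate_succ_apply', Function.iterate_succ_apply', commIt, ih]
      exact h
  obtain ⟨i, j, hij, heq⟩ := Finite.exists_ne_map_eq_of_infinite (fun k : ℕ => f^[k] x)
  wlog hlt : i < j generalizing i j
  · exact this j i hij.symm heq.symm (by omega)
  refine ⟨j - i, by omega, ?_⟩
  have hji : f^[j] x = f^[j - i] (f^[i] x) := by
    rw [← Function.iterate_add_apply]; congr 1; omega
  calc f^[j-i] x = f^[j-i] (g^[i] (f^[i] x)) := by rw [claim]
    _ = g^[i] (f^[j-i] (f^[i] x)) := (commIt2 i (j-i) _).symm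
    _ = g^[i] (f^[j] x) := by rw [← hji]
    _ = g^[i] (f^[i] x) := by rw [heq]
    _ = x := claim i

private lemma key' [Semigroup U] [Finite U] (S : Subsemigroup U) {x w : U} (hw : w ∈ S)
    (h : GreenL Set.univ x (x * w)) : x * w = x ∨ ∃ v ∈ S, (x * w) * v = x := by
  rcases h.2 with h2 | ⟨u, -, hu⟩
  · exact Or.inl h2
  obtain ⟨d, hd1, hdx⟩ := key0' u w x hu
  -- powers of w within S
  have wp : ∀ m : ℕ, ∃ v ∈ S, ∀ z : U, (fun z => z * w)^[m + 1] z = z * v := by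
    intro m
    induction m with
    | zero => exact ⟨w, hw, fun z => rfl⟩
    | succ m ih =>
      obtain ⟨v, hv, hvz⟩ := ih
      refine ⟨v * w, S.mul_mem hv hw, fun z => ?_⟩
      rw [Function.iterate_succ_apply', hvz, mul_assoc]
  rcases Nat.eq_or_lt_of_le hd1 with h1 | h2
  · left
    have := hdx
    rw [← h1] at this
    exact this
  · right
    obtain ⟨v, hv, hvz⟩ := wp (d - 2)
    refine ⟨v, hv, ?_⟩
    have : (fun z => z * w)^[d] x = (x * w) * v := by
      have hd : d = (d - 2 + 1) + 1 := by omega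
      rw [hd, Function.iterate_succ_apply, hvz]
    rw [← this, hdx]

private lemma lcl_eq_greenL [Mul U] {a b : U} (h : Lcl a = Lcl b) :
    GreenL Set.univ a b := by
  have : b ∈ Lcl b := ⟨Or.inl rfl, Or.inl rfl⟩
  rw [← h] at this
  exact this

/-- For `x ∈ S` and `s ∈ S^1` (so that `y = x s`), the classes `L_x^U` and
`L_{xs}^U` lie in the same strongly connected component of the right action of
`S` on `U/L^U` if and only if `x R^S x s`. -/
theorem scc_iff_rclass [Semigroup U] [Finite U] (S : Subsemigroup U)
    (x : U) (hx : x ∈ S) (y : U) (hy : y = x ∨ ∃ s ∈ S, x * s = y) :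
    (reachC (S : Set U) x y ∧ reachC (S : Set U) y x) ↔ GreenR (S : Set U) x y := by
  rcases hy with rfl | ⟨s, hs, rfl⟩
  · constructor
    · intro _; exact ⟨Or.inl rfl, Or.inl rfl⟩
    · intro _; exact ⟨Or.inl rfl, Or.inl rfl⟩
  constructor
  · rintro ⟨-, hyx⟩
    refine ⟨Or.inr ⟨s, hs, rfl⟩, ?_⟩
    rcases hyx with heq | ⟨t, ht, heq⟩
    · -- x L^U x*s
      have hL : GreenL Set.univ x (x * s) := by
        have h' := lcl_eq_greenL heq
        exact ⟨h'.2, h'.1⟩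
      rcases key' S hs hL with h1 | ⟨v, hv, hvx⟩
      · exact Or.inl h1
      · exact Or.inr ⟨v, hv, hvx⟩
    · -- x L^U x*s*t
      have hL : GreenL Set.univ x (x * (s * t)) := by
        have h' := lcl_eq_greenL heq
        rw [← mul_assoc]
        exact ⟨h'.2, h'.1⟩
      rcases key' S (S.mul_mem hs ht) hL with h1 | ⟨v, hv, hvx⟩
      · refine Or.inr ⟨t, ht, ?_⟩
        rw [mul_assoc]; exact h1
      · refine Or.inr ⟨t * v, S.mul_mem ht hv, ?_⟩
        calc x * s * (t * v) = x * (s * t) * v := by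
              rw [mul_assoc, mul_assoc, mul_assoc]
          _ = x := hvx
  · rintro ⟨-, hback⟩
    refine ⟨Or.inr ⟨s, hs, rfl⟩, ?_⟩
    rcases hback with heq | ⟨a, ha, hax⟩
    · exact Or.inl (by rw [heq])
    · exact Or.inr ⟨a, ha, by rw [hax]⟩
end

section
/- Let U be a finite semigroup, S a subsemigroup of U, and let x, y, s ∈ S. If x R^S y and xs L^U y, then xs R^S y. -/
variable {U : Type*}

/-- `spow e n = e ^ (n+1)` in a semigroup. -/
def spow [Mul U] (e : U) : ℕ → U
  | 0 => e
  | n + 1 => spow e n * e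

lemma spow_mem [Mul U] (S : Subsemigroup U) {e : U} (he : e ∈ S) : ∀ n, spow e n ∈ S
  | 0 => he
  | n + 1 => S.mul_mem (spow_mem S he n) he

lemma coe_spow [Semigroup U] (e : U) :
    ∀ n, ((e : WithOne U)) ^ (n + 1) = ((spow e n : U) : WithOne U)
  | 0 => pow_one _
  | n + 1 => by
      rw [pow_succ, coe_spow e n, spow, WithOne.coe_mul]

lemma exists_idem_pow {M : Type*} [Monoid M] [Finite M] (a : M) :
    ∃ k, 1 ≤ k ∧ a ^ k * a ^ k = a ^ k := by
  obtain ⟨m, n, hne, h⟩ := Finite.exists_ne_map_eq_of_infinite (fun t : ℕ => a ^ t)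
  wlog hmn : m < n generalizing m n
  · exact this n m hne.symm h.symm (by omega)
  have key : ∀ j, m ≤ j → a ^ (j + (n - m)) = a ^ j := by
    intro j hj
    have h1 : a ^ (j + (n - m)) = a ^ (j - m) * a ^ n := by
      rw [← pow_add]; congr 1; omega
    have h2 : a ^ (j - m) * a ^ m = a ^ j := by
      rw [← pow_add]; congr 1; omega
    rw [h1, ← h, h2]
  have key2 : ∀ t j, m ≤ j → a ^ (j + t * (n - m)) = a ^ j := by
    intro t
    induction t with
    | zero => simp
    | succ t ih =>
        intro j hj
        rw [show j + (t + 1) * (n - m) = (j + t * (n - m)) + (n - m) by ring,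
          key _ (by omega), ih j hj]
  refine ⟨(m + 1) * (n - m), Nat.one_le_iff_ne_zero.mpr (Nat.mul_ne_zero (by omega) (by omega)), ?_⟩
  have hk : m ≤ (m + 1) * (n - m) := by
    have : n - m ≥ 1 := by omega
    nlinarith
  rw [← pow_add, key2 (m + 1) _ hk]

instance finWithOne [Finite U] : Finite (WithOne U) := by
  haveI := Fintype.ofFinite U
  exact inferInstanceAs (Finite (Option U))

lemma key_lemma [Semigroup U] [Finite U] (y e u : U) (h : y = u * (y * e)) :
    y = y * e ∨ ∃ n, y = (y * e) * spow e n := by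
  obtain ⟨k, hk1, hk⟩ := exists_idem_pow (M := WithOne U) (e : WithOne U)
  have hpow : ∀ t, (y : WithOne U) = (u : WithOne U) ^ t * ((y : WithOne U) * (e : WithOne U) ^ t) := by
    intro t
    induction t with
    | zero => simp
    | succ t ih =>
        have hy : (y : WithOne U) = (u : WithOne U) * ((y : WithOne U) * (e : WithOne U)) := by
          exact_mod_cast h
        calc (y : WithOne U) = u * (y * e) := hy
          _ = (u : WithOne U) * (((u : WithOne U) ^ t * ((y : WithOne U) * (e : WithOne U) ^ t)) * e) := by
              rw [← ih]
          _ = (u : WithOne U) ^ (t + 1) * ((y : WithOne U) * (e : WithOne U) ^ (t + 1)) := by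
              rw [pow_succ' (u : WithOne U), pow_succ (e : WithOne U)]
              simp only [mul_assoc]
  have h2 : (y : WithOne U) * (e : WithOne U) ^ k = (y : WithOne U) := by
    calc (y : WithOne U) * (e : WithOne U) ^ k
        = ((u : WithOne U) ^ k * ((y : WithOne U) * (e : WithOne U) ^ k)) * (e : WithOne U) ^ k := by
          rw [← hpow k]
      _ = (u : WithOne U) ^ k * ((y : WithOne U) * ((e : WithOne U) ^ k * (e : WithOne U) ^ k)) := by
          simp [mul_assoc]
      _ = (u : WithOne U) ^ k * ((y : WithOne U) * (e : WithOne U) ^ k) := by rw [hk]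
      _ = (y : WithOne U) := (hpow k).symm
  match k, hk1 with
  | 1, _ =>
      left
      have : ((y * e : U) : WithOne U) = (y : WithOne U) := by
        rw [WithOne.coe_mul, ← pow_one (e : WithOne U)]; exact h2
      exact (WithOne.coe_inj.mp this).symm
  | (j + 2), _ =>
      right
      refine ⟨j, ?_⟩
      have hb : (e : WithOne U) ^ (j + 2) = ((e * spow e j : U) : WithOne U) := by
        rw [pow_succ', coe_spow, WithOne.coe_mul]
      have : (((y * e) * spow e j : U) : WithOne U) = (y : WithOne U) := by
        push_cast
        rw [mul_assoc, ← WithOne.coe_mul e (spow e j), ← hb]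
        exact h2
      exact (WithOne.coe_inj.mp this).symm

/-- If `x R^S y` and `x s L^U y`, then `x s R^S y`. -/
theorem rclass_of_lclass_U [Semigroup U] [Finite U] (S : Subsemigroup U)
    (x y s : U) (hx : x ∈ S) (hy : y ∈ S) (hs : s ∈ S)
    (h1 : GreenR (S : Set U) x y) (h2 : GreenL (Set.univ : Set U) (x * s) y) :
    GreenR (S : Set U) (x * s) y := by
  obtain ⟨hR1, hR2⟩ := h1
  obtain ⟨hL1, hL2⟩ := h2
  obtain ⟨e, heS, hye⟩ : ∃ e ∈ S, y * e = x * s := by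
    rcases hR2 with h | ⟨a, haS, ha⟩
    · exact ⟨s, hs, by rw [h]⟩
    · exact ⟨a * s, S.mul_mem haS hs, by rw [← mul_assoc, ha]⟩
  rcases hL1 with h | ⟨u, -, hu⟩
  · exact ⟨Or.inl h, Or.inr ⟨e, heS, hye⟩⟩
  · have hk := key_lemma y e u (by rw [hye]; exact hu.symm)
    refine ⟨?_, Or.inr ⟨e, heS, hye⟩⟩
    rcases hk with h | ⟨n, hn⟩
    · exact Or.inl (by rw [← hye, ← h])
    · exact Or.inr ⟨spow e n, spow_mem S heS n, by rw [← hye]; exact hn.symm⟩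
end

section
/- Let U be a finite semigroup, S a subsemigroup of U, and let x, y, t ∈ S. If x L^S y and tx R^U y, then tx L^S y. -/
variable {U : Type*}

private lemma key_aux [Semigroup U] [Finite U] (S : Subsemigroup U) {c y z : U}
    (hcS : c ∈ S) (hz : c * y = z) (hu : ∃ u, z * u = y) :
    z = y ∨ ∃ a ∈ (S : Set U), a * z = y := by
  obtain ⟨u, hu⟩ := hu
  set f : U → U := fun w => c * w with hf
  have hA : ∀ (k : ℕ) (a b : U), f^[k] (a * b) = f^[k] a * b := by
    intro k
    induction k with
    | zero => intro a b; simp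
    | succ k ih =>
      intro a b
      rw [Function.iterate_succ_apply', ih, Function.iterate_succ_apply']
      simp only [hf, mul_assoc]
  have hB : ∀ (k : ℕ) (a : U), f^[k + 1] a = f^[k] c * a := by
    intro k
    induction k with
    | zero => intro a; simp [hf]
    | succ k ih =>
      intro a
      rw [Function.iterate_succ_apply', ih, Function.iterate_succ_apply']
      simp only [hf, mul_assoc]
  have hC : ∀ k : ℕ, f^[k] c ∈ S := by
    intro k
    induction k with
    | zero => simpa using hcS
    | succ k ih =>
      rw [Function.iterate_succ_apply']
      exact S.mul_mem hcS ih
  have hfy : f y = z := hz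
  have hyz : y = f y * u := by rw [hfy, hu]
  have hD : ∀ k : ℕ, ∃ w, y = f^[k + 1] y * w := by
    intro k
    induction k with
    | zero => exact ⟨u, by simpa using hyz⟩
    | succ k ih =>
      obtain ⟨w, hw⟩ := ih
      have h1 : f^[k + 1] y = f^[k + 2] y * u := by
        conv_lhs => rw [hyz]
        rw [hA, ← Function.iterate_succ_apply]
      refine ⟨u * w, ?_⟩
      conv_lhs => rw [hw, h1]
      exact mul_assoc _ _ _
  have main : ∀ i j : ℕ, i < j → f^[i] y = f^[j] y →
      (z = y ∨ ∃ a ∈ (S : Set U), a * z = y) := by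
    intro i j hlt heq
    have hym : y = f^[j - i] y := by
      rcases Nat.eq_zero_or_pos i with h0 | hpos
      · subst h0
        simpa using heq
      · obtain ⟨i', rfl⟩ := Nat.exists_eq_succ_of_ne_zero hpos.ne'
        obtain ⟨w, hw⟩ := hD i'
        have hji : f^[j] y = f^[j - (i' + 1)] (f^[i' + 1] y) := by
          rw [← Function.iterate_add_apply, Nat.sub_add_cancel hlt.le]
        calc y = f^[i' + 1] y * w := hw
          _ = f^[j] y * w := by rw [heq]
          _ = f^[j - (i' + 1)] (f^[i' + 1] y) * w := by rw [hji]
          _ = f^[j - (i' + 1)] (f^[i' + 1] y * w) := by rw [hA]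
          _ = f^[j - (i' + 1)] y := by rw [← hw]
    obtain ⟨m, hm⟩ : ∃ m, j - i = m + 1 :=
      ⟨j - i - 1, by omega⟩
    rw [hm] at hym
    match m with
    | 0 =>
      left
      rw [← hz]
      conv_rhs => rw [hym]
      simp [hf]
    | k + 1 =>
      right
      refine ⟨f^[k] c, hC k, ?_⟩
      have : f^[k + 1] z = f^[k] c * z := hB k z
      rw [← this, ← hfy, ← Function.iterate_succ_apply, ← hym]
  obtain ⟨i, j, hij, heq⟩ := Finite.exists_ne_map_eq_of_infinite (fun n : ℕ => f^[n] y)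
  rcases Ne.lt_or_gt hij with hlt | hlt
  · exact main i j hlt heq
  · exact main j i hlt heq.symm

/-- If `x L^S y` and `t x R^U y`, then `t x L^S y`. -/
theorem lclass_of_rclass_U [Semigroup U] [Finite U] (S : Subsemigroup U)
    (x y t : U) (hx : x ∈ S) (hy : y ∈ S) (ht : t ∈ S)
    (h1 : GreenL (S : Set U) x y) (h2 : GreenR (Set.univ : Set U) (t * x) y) :
    GreenL (S : Set U) (t * x) y := by
  obtain ⟨c, hcS, hcy⟩ : ∃ c ∈ (S : Set U), c * y = t * x := by
    rcases h1.2 with heq | ⟨b, hbS, hby⟩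
    · exact ⟨t, ht, by rw [heq]⟩
    · exact ⟨t * b, S.mul_mem ht hbS, by rw [mul_assoc, hby]⟩
  constructor
  · rcases h2.1 with heq | ⟨u, _, hu⟩
    · exact Or.inl heq
    · exact key_aux S hcS hcy ⟨u, hu⟩
  · exact Or.inr ⟨c, hcS, hcy⟩
end

section
/- Let U be a finite semigroup, S a subsemigroup, and x ∈ S with x' ∈ U satisfying x x' x = x. Then the set L_x^U ∩ R_x^S is a group under the multiplication s * t = s x' t, with identity element x. -/
variable {U : Type*}

section Aux

variable [Semigroup U] (S : Subsemigroup U) (x x' : U)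

/-- `x` acts as a right identity (via `x'`) on the `L^U`-class of `x`. -/
lemma aux_rid (hx' : x * x' * x = x) {s : U} (hs : s ∈ Lcl x) :
    s * x' * x = s := by
  rcases hs.1 with h | ⟨a, -, ha⟩
  · subst h; exact hx'
  · subst ha
    calc a * x * x' * x = a * (x * x' * x) := by simp [mul_assoc]
    _ = a * x := by rw [hx']

/-- `x` acts as a left identity (via `x'`) on the `R^S`-class of `x`. -/
lemma aux_lid (hx' : x * x' * x = x) {s : U} (hs : s ∈ Rcl (S : Set U) x) :
    x * x' * s = s := by
  rcases hs.1 with h | ⟨a, -, ha⟩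
  · subst h; exact hx'
  · subst ha
    calc x * x' * (x * a) = x * x' * x * a := by simp [mul_assoc]
    _ = x * a := by rw [hx']

/-- From `s ∈ L_x^U` one can always left-divide: `∃ c, c * s = x`. -/
lemma aux_ldiv (hx' : x * x' * x = x) {s : U} (hs : s ∈ Lcl x) :
    ∃ c, c * s = x := by
  rcases hs.2 with h | ⟨a, -, ha⟩
  · exact ⟨x * x', by rw [h, hx']⟩
  · exact ⟨a, ha⟩

lemma aux_mem_x (hx' : x * x' * x = x) : x ∈ Lcl x ∩ Rcl (S : Set U) x :=
  ⟨⟨Or.inl rfl, Or.inl rfl⟩, ⟨Or.inl rfl, Or.inl rfl⟩⟩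

/-- Closure of `L_x^U ∩ R_x^S` under `s * x' * t`. -/
lemma aux_closed (hx' : x * x' * x = x)
    {s t : U} (hs : s ∈ Lcl x ∩ Rcl (S : Set U) x)
    (ht : t ∈ Lcl x ∩ Rcl (S : Set U) x) :
    s * x' * t ∈ Lcl x ∩ Rcl (S : Set U) x := by
  obtain ⟨hsL, hsR⟩ := hs
  obtain ⟨htL, htR⟩ := ht
  constructor
  · -- L-class membership
    rcases htL.1 with h | ⟨a, -, ha⟩
    · -- t = x
      rw [← h, aux_rid x x' hx' hsL]; exact hsL
    · constructor
      · exact Or.inr ⟨s * x' * a, trivial, by rw [← ha]; simp [mul_assoc]⟩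
      · -- find left divisor of s*x'*t returning x
        obtain ⟨c, hc⟩ := aux_ldiv x x' hx' hsL
        have ht' : x * x' * t = t := aux_lid S x x' hx' htR
        have h1 : c * (s * x' * t) = t := by
          calc c * (s * x' * t) = c * s * x' * t := by simp [mul_assoc]
          _ = x * x' * t := by rw [hc]
          _ = t := ht'
        obtain ⟨d, hd⟩ := aux_ldiv x x' hx' htL
        exact Or.inr ⟨d * c, trivial, by rw [mul_assoc, h1, hd]⟩
  · -- R^S-class membership
    rcases htR.1 with h | ⟨b, hbS, hb⟩
    · rw [← h, aux_rid x x' hx' hsL]; exact hsR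
    · have key : s * x' * t = s * b := by
        rw [← hb]
        calc s * x' * (x * b) = s * x' * x * b := by simp [mul_assoc]
        _ = s * b := by rw [aux_rid x x' hx' hsL]
      constructor
      · rcases hsR.1 with h | ⟨a, haS, ha⟩
        · exact Or.inr ⟨b, hbS, by rw [key, h]⟩
        · exact Or.inr ⟨a * b, S.mul_mem haS hbS, by rw [key, ← ha, mul_assoc]⟩
      · rcases htR.2 with h | ⟨d, hdS, hd⟩
        · rw [h, aux_rid x x' hx' hsL]; exact hsR.2
        · have h1 : s * x' * t * d = s := by
            rw [mul_assoc, hd]; exact aux_rid x x' hx' hsL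
          rcases hsR.2 with h | ⟨e, heS, he⟩
          · exact Or.inr ⟨d, hdS, by rw [h1, h]⟩
          · exact Or.inr ⟨d * e, S.mul_mem hdS heS, by rw [← mul_assoc, h1, he]⟩

/-- `x` is the only idempotent of the `*`-operation in `L_x^U ∩ R_x^S`. -/
lemma aux_idem (hx' : x * x' * x = x)
    {e : U} (he : e ∈ Lcl x ∩ Rcl (S : Set U) x) (hee : e * x' * e = e) :
    e = x := by
  rcases he.2.2 with h | ⟨d, -, hd⟩
  · exact h
  · have : x = e := by
      calc x = e * d := hd.symm
      _ = e * x' * e * d := by rw [hee]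
      _ = e * x' * (e * d) := by simp [mul_assoc]
      _ = e * x' * x := by rw [hd]
      _ = e := aux_rid x x' hx' he.1
    exact this.symm

end Aux

/-- Iterated `*`-powers of `s`: `qpow x' s n = s^(n+1)` w.r.t. `a * b := a x' b`. -/
def qpow [Semigroup U] (x' s : U) : ℕ → U
  | 0 => s
  | n + 1 => qpow x' s n * x' * s

section Aux2

variable [Semigroup U] (S : Subsemigroup U) (x x' s : U)

lemma qpow_add (m : ℕ) : ∀ n, qpow x' s (m + n + 1) = qpow x' s m * x' * qpow x' s n
  | 0 => rfl
  | n + 1 => by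
    have : qpow x' s (m + (n + 1) + 1) = qpow x' s (m + n + 1) * x' * s := rfl
    rw [this, qpow_add m n, qpow]
    simp [mul_assoc]

lemma qpow_mem (hx' : x * x' * x = x) (hs : s ∈ Lcl x ∩ Rcl (S : Set U) x) :
    ∀ n, qpow x' s n ∈ Lcl x ∩ Rcl (S : Set U) x
  | 0 => hs
  | n + 1 => aux_closed S x x' hx' (qpow_mem hx' hs n) hs

lemma qpow_period (a d : ℕ) (h : qpow x' s a = qpow x' s (a + d)) :
    ∀ k, qpow x' s (a + k) = qpow x' s (a + k + d) := by
  intro k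
  induction k with
  | zero => simpa using h
  | succ k ih =>
    have e1 : qpow x' s (a + (k + 1)) = qpow x' s (a + k) * x' * s := rfl
    have e2 : qpow x' s (a + (k + 1) + d) = qpow x' s (a + k + d) * x' * s := by
      have : a + (k + 1) + d = (a + k + d) + 1 := by omega
      rw [this]; rfl
    rw [e1, e2, ih]

lemma qpow_period' (a d : ℕ) (h : qpow x' s a = qpow x' s (a + d)) (k : ℕ) :
    ∀ j, qpow x' s (a + k) = qpow x' s (a + k + j * d) := by
  intro j
  induction j with
  | zero => simp
  | succ j ih =>
    have : a + k + (j + 1) * d = a + (k + j * d) + d := by ring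
    rw [this, ← qpow_period x' s a d h (k + j * d)]
    rw [ih]; congr 1; omega

/-- Existence of inverses in the finite case. -/
lemma aux_inv [Finite U] (hx : x ∈ S) (hx' : x * x' * x = x)
    (hs : s ∈ Lcl x ∩ Rcl (S : Set U) x) :
    ∃ t ∈ Lcl x ∩ Rcl (S : Set U) x, s * x' * t = x ∧ t * x' * s = x := by
  obtain ⟨m, n, hmn, heq⟩ :=
    Finite.exists_ne_map_eq_of_infinite (qpow x' s)
  obtain ⟨a, d, hd, hper⟩ : ∃ a d, 0 < d ∧ qpow x' s a = qpow x' s (a + d) := by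
    rcases hmn.lt_or_gt with h | h
    · exact ⟨m, n - m, by omega, by rw [heq]; congr 1; omega⟩
    · exact ⟨n, m - n, by omega, by rw [← heq]; congr 1; omega⟩
  have hDge : a + 1 ≤ (a + 1) * d := Nat.le_mul_of_pos_right _ hd
  obtain ⟨c, hD, hac⟩ : ∃ c, c + 1 = (a + 1) * d ∧ a ≤ c :=
    ⟨(a + 1) * d - 1, by omega, by omega⟩
  -- q c is idempotent
  have hidem : qpow x' s c * x' * qpow x' s c = qpow x' s c := by
    have hper2 := qpow_period' x' s a d hper (c - a) (a + 1)
    have e2 : a + (c - a) = c := by omega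
    rw [e2] at hper2
    have e3 : c + (a + 1) * d = c + c + 1 := by rw [← hD]; omega
    rw [e3] at hper2
    rw [← qpow_add x' s c c]
    exact hper2.symm
  have hcx : qpow x' s c = x :=
    aux_idem S x x' hx' (qpow_mem S x x' s hx' hs c) hidem
  match c, hcx with
  | 0, hcx =>
    refine ⟨x, aux_mem_x S x x' hx', ?_, ?_⟩ <;>
      · rw [show s = x from hcx]; exact hx'
  | k + 1, hcx =>
    refine ⟨qpow x' s k, qpow_mem S x x' s hx' hs k, ?_, ?_⟩
    · have h1 : qpow x' s (0 + k + 1) = s * x' * qpow x' s k := qpow_add x' s 0 k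
      rw [show 0 + k + 1 = k + 1 by omega] at h1
      rw [← h1]
      exact hcx
    · exact hcx

end Aux2

/-- If `x ∈ S` and `x' ∈ U` satisfies `x x' x = x`, then `L_x^U ∩ R_x^S` is a
group under `s * t := s x' t`, with identity `x`: it contains `x`, is closed
under the operation, `x` is a two-sided identity, inverses exist, and the
operation is associative. -/
theorem lclassU_inter_rclassS_group [Semigroup U] [Finite U] (S : Subsemigroup U)
    (x : U) (hx : x ∈ S) (x' : U) (hx' : x * x' * x = x) :
    x ∈ Lcl x ∩ Rcl (S : Set U) x ∧
    (∀ s ∈ Lcl x ∩ Rcl (S : Set U) x, ∀ t ∈ Lcl x ∩ Rcl (S : Set U) x,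
      s * x' * t ∈ Lcl x ∩ Rcl (S : Set U) x) ∧
    (∀ s ∈ Lcl x ∩ Rcl (S : Set U) x, x * x' * s = s ∧ s * x' * x = s) ∧
    (∀ s ∈ Lcl x ∩ Rcl (S : Set U) x, ∃ t ∈ Lcl x ∩ Rcl (S : Set U) x,
      s * x' * t = x ∧ t * x' * s = x) ∧
    (∀ s t u : U, s * x' * t * x' * u = s * x' * (t * x' * u)) := by
  refine ⟨aux_mem_x S x x' hx', fun s hs t ht => aux_closed S x x' hx' hs ht,
    fun s hs => ⟨aux_lid S x x' hx' hs.2, aux_rid x x' hx' hs.1⟩,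
    fun s hs => aux_inv S x x' s hx hx' hs,
    fun s t u => by simp [mul_assoc]⟩
end

section
/- Let U be a finite semigroup, S a subsemigroup, x ∈ S, x' ∈ U with x x' x = x, and s, t ∈ Stab_U(L_x^U). Then the following are equivalent: (a) s and t induce the same map on L_x^U; (b) ys = yt for all y ∈ L_x^U; (c) there exists y ∈ L_x^U with ys = yt. -/
variable {U : Type*}

/-- The right action of `U^1` (encoded as `Option U`) on `U`. -/
def act1U [Mul U] (u : U) (o : Option U) : U := o.elim u (fun s => u * s)

/-- The stabiliser `Stab_U(L_x^U)` under the right action of `U^1` on subsets of `U`. -/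
def StabU [Mul U] (x : U) : Set (Option U) :=
  {o | (fun y => act1U y o) '' Lcl x = Lcl x}

lemma act1U_mul_left [Semigroup U] (a y : U) (o : Option U) :
    act1U (a * y) o = a * act1U y o := by
  cases o <;> simp [act1U, mul_assoc]

/-- For `s, t ∈ Stab_U(L_x^U)` the following are equivalent: (a) `s` and `t`
induce the same map on `L_x^U`; (b) `y s = y t` for all `y ∈ L_x^U`; (c) there
exists `y ∈ L_x^U` with `y s = y t`. -/
theorem stab_same_map_tfae [Semigroup U] [Finite U] (S : Subsemigroup U)
    (x : U) (hx : x ∈ S) (x' : U) (hx' : x * x' * x = x)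
    (o p : Option U) (ho : o ∈ StabU x) (hp : p ∈ StabU x) :
    (((fun y : ↥(Lcl x) => act1U (y : U) o) = fun y : ↥(Lcl x) => act1U (y : U) p) ↔
      (∀ y ∈ Lcl x, act1U y o = act1U y p)) ∧
    ((∀ y ∈ Lcl x, act1U y o = act1U y p) ↔ (∃ y ∈ Lcl x, act1U y o = act1U y p)) := by
  constructor
  · constructor
    · intro h y hy
      exact congrFun h ⟨y, hy⟩
    · intro h
      funext y
      exact h y y.2
  · constructor
    · intro h
      exact ⟨x, ⟨Or.inl rfl, Or.inl rfl⟩, h x ⟨Or.inl rfl, Or.inl rfl⟩⟩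
    · rintro ⟨y, hy, hyst⟩ z hz
      -- z L x L y, so z = y, or z = a * y for some a
      have key : ∀ w, (w = y ∨ ∃ a, a * y = w) → act1U w o = act1U w p := by
        rintro w (rfl | ⟨a, rfl⟩)
        · exact hyst
        · rw [act1U_mul_left, act1U_mul_left, hyst]
      obtain ⟨hxz, -⟩ := hz
      obtain ⟨-, hyx⟩ := hy
      apply key
      rcases hxz with rfl | ⟨a, ha, rfl⟩
      · rcases hyx with rfl | ⟨b, -, rfl⟩
        · exact Or.inl rfl
        · exact Or.inr ⟨b, rfl⟩
      · rcases hyx with rfl | ⟨b, -, rfl⟩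
        · exact Or.inr ⟨a, rfl⟩
        · exact Or.inr ⟨a * b, mul_assoc a b y⟩
end

section
/- Let U be a finite semigroup, S a subsemigroup, x ∈ S with x' ∈ U satisfying x x' x = x. Then the H^S-class of x is a group under the multiplication s * t = s x' t with identity x, and this group is isomorphic to the Schützenberger group of H_x^S (the quotient of Stab_S(H_x^S) by the kernel of its right-multiplication action on H_x^S). -/
variable {U : Type*}

/-- The stabiliser of the `H^S`-class of `x` under the right action of `S^1`
on subsets of `U`. -/
def StabOfH [Mul U] (S : Subsemigroup U) (x : U) : Set (Option ↥S) :=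
  {o | (fun y => act1 S y o) '' {z | GreenH (S : Set U) x z} = {z | GreenH (S : Set U) x z}}

section Aux

variable [Semigroup U] (S : Subsemigroup U) (x : U)

lemma greenH_self : x ∈ {z | GreenH (S : Set U) x z} :=
  ⟨⟨Or.inl rfl, Or.inl rfl⟩, ⟨Or.inl rfl, Or.inl rfl⟩⟩

/-- If `x * c = x` then every element L-below x is fixed by `c`. -/
lemma aux_fix {y c : U} (hy : x = y ∨ ∃ u ∈ (S : Set U), u * x = y)
    (hc : x * c = x) : y * c = y := by
  rcases hy with rfl | ⟨u, -, rfl⟩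
  · exact hc
  · rw [mul_assoc, hc]

/-- Right multiplication by `a` maps the `H^S`-class of `x` to itself,
provided `x * a` lies in that class. -/
lemma aux_mapsTo {a : U} (ha : a ∈ S) (hxa : GreenH (S : Set U) x (x * a))
    {y : U} (hy : GreenH (S : Set U) x y) : GreenH (S : Set U) x (y * a) := by
  obtain ⟨⟨hL1, hL2⟩, ⟨hR1, hR2⟩⟩ := hxa
  obtain ⟨⟨yL1, yL2⟩, ⟨yR1, yR2⟩⟩ := hy
  refine ⟨⟨?_, ?_⟩, ⟨?_, ?_⟩⟩
  · -- x = y*a ∨ ∃ u∈S, u*x = y*a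
    rcases yL1 with rfl | ⟨u1, hu1, rfl⟩
    · exact hL1
    · rcases hL1 with h | ⟨u, hu, h⟩
      · exact Or.inr ⟨u1, hu1, by rw [mul_assoc, ← h]⟩
      · exact Or.inr ⟨u1 * u, S.mul_mem hu1 hu, by rw [mul_assoc, h, mul_assoc]⟩
  · -- y*a = x ∨ ∃ v∈S, v*(y*a) = x
    rcases hL2 with h | ⟨v, hv, h⟩
    · rcases yL2 with rfl | ⟨v1, hv1, hv1e⟩
      · exact Or.inl h
      · exact Or.inr ⟨v1, hv1, by rw [← mul_assoc, hv1e, h]⟩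
    · rcases yL2 with rfl | ⟨v1, hv1, hv1e⟩
      · exact Or.inr ⟨v, hv, h⟩
      · exact Or.inr ⟨v * v1, S.mul_mem hv hv1, by
          rw [mul_assoc, ← mul_assoc v1, hv1e, h]⟩
  · -- x = y*a ∨ ∃ s∈S, x*s = y*a
    rcases yR1 with rfl | ⟨s1, hs1, rfl⟩
    · exact Or.inr ⟨a, ha, rfl⟩
    · exact Or.inr ⟨s1 * a, S.mul_mem hs1 ha, by rw [← mul_assoc]⟩
  · -- y*a = x ∨ ∃ t∈S, (y*a)*t = x
    rcases hR2 with h | ⟨b, hb, hbe⟩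
    · rw [aux_fix S x yL1 h]
      exact yR2
    · have hy' : y * a * b = y := by
        rcases yL1 with rfl | ⟨u1, -, rfl⟩
        · exact hbe
        · rw [mul_assoc, mul_assoc, ← mul_assoc x a b, hbe]
      rcases yR2 with rfl | ⟨t1, ht1, ht1e⟩
      · exact Or.inr ⟨b, hb, hy'⟩
      · exact Or.inr ⟨b * t1, S.mul_mem hb ht1, by
          rw [← mul_assoc, hy', ht1e]⟩

/-- Right multiplication by `a` is injective on the `H^S`-class of `x`. -/
lemma aux_injOn {a : U} (hxa : GreenH (S : Set U) x (x * a)) :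
    Set.InjOn (fun y => y * a) {z | GreenH (S : Set U) x z} := by
  intro y hy y' hy' h
  have h' : y * a = y' * a := h
  rcases hxa.2.2 with he | ⟨b, -, hbe⟩
  · rw [← aux_fix S x hy.1.1 he, ← aux_fix S x hy'.1.1 he, h']
  · have k : ∀ w : U, GreenH (S : Set U) x w → w * a * b = w := by
      intro w hw
      rcases hw.1.1 with rfl | ⟨u1, -, rfl⟩
      · exact hbe
      · rw [mul_assoc, mul_assoc, ← mul_assoc x a b, hbe]
    rw [← k y hy, ← k y' hy', h']

lemma aux_image [Finite U] {a : U} (ha : a ∈ S)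
    (hxa : GreenH (S : Set U) x (x * a)) :
    (fun y => y * a) '' {z | GreenH (S : Set U) x z} = {z | GreenH (S : Set U) x z} := by
  have hfin : ({z | GreenH (S : Set U) x z}).Finite := Set.toFinite _
  have hmt : Set.MapsTo (fun y => y * a) {z | GreenH (S : Set U) x z}
      {z | GreenH (S : Set U) x z} := fun y hy => aux_mapsTo S x ha hxa hy
  exact ((hfin.injOn_iff_bijOn_of_mapsTo hmt).mp (aux_injOn S x hxa)).image_eq

/-- Identity laws in the `H^S`-class. -/
lemma aux_id {x' : U} (hx' : x * x' * x = x) {s : U}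
    (hs : GreenH (S : Set U) x s) : x * x' * s = s ∧ s * x' * x = s := by
  constructor
  · rcases hs.2.1 with rfl | ⟨f, -, rfl⟩
    · exact hx'
    · rw [← mul_assoc, hx']
  · rcases hs.1.1 with rfl | ⟨c, -, rfl⟩
    · exact hx'
    · rw [mul_assoc, mul_assoc, ← mul_assoc x x' x, hx']

end Aux

/-- If `x ∈ S` and `x' ∈ U` satisfies `x x' x = x`, then `H_x^S` is a group
under `s * t := s x' t` with identity `x`, and the map `s|_H ↦ x s` is an
isomorphism from the Schützenberger group of `H_x^S` (the quotient of
`Stab_S(H_x^S)` by the kernel of its right-multiplication action on `H_x^S`)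
onto this group. -/
theorem hclass_group_iso_schutzenberger [Semigroup U] [Finite U]
    (S : Subsemigroup U) (x : U) (hx : x ∈ S) (x' : U) (hx' : x * x' * x = x) :
    -- `H_x^S` is a group under `s * t = s x' t` with identity `x`
    (x ∈ {z | GreenH (S : Set U) x z} ∧
     (∀ s ∈ {z | GreenH (S : Set U) x z}, ∀ t ∈ {z | GreenH (S : Set U) x z},
        s * x' * t ∈ {z | GreenH (S : Set U) x z}) ∧
     (∀ s ∈ {z | GreenH (S : Set U) x z}, x * x' * s = s ∧ s * x' * x = s) ∧
     (∀ s ∈ {z | GreenH (S : Set U) x z}, ∃ t ∈ {z | GreenH (S : Set U) x z},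
        s * x' * t = x ∧ t * x' * s = x) ∧
     (∀ s t u : U, s * x' * t * x' * u = s * x' * (t * x' * u))) ∧
    -- the map `s|_H ↦ x s` is an isomorphism from the Schützenberger group onto it
    ((∀ o ∈ StabOfH S x, act1 S x o ∈ {z | GreenH (S : Set U) x z}) ∧
     (∀ o ∈ StabOfH S x, ∀ p ∈ StabOfH S x,
        ((∀ y ∈ {z | GreenH (S : Set U) x z}, act1 S y o = act1 S y p) ↔
          act1 S x o = act1 S x p)) ∧
     (∀ g ∈ {z | GreenH (S : Set U) x z}, ∃ o ∈ StabOfH S x, act1 S x o = g) ∧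
     (∀ o ∈ StabOfH S x, ∀ p ∈ StabOfH S x,
        act1 S (act1 S x o) p = act1 S x o * x' * act1 S x p)) := by
  set H : Set U := {z | GreenH (S : Set U) x z} with hHdef
  have hxH : x ∈ H := greenH_self S x
  -- closure
  have hclosure : ∀ s ∈ H, ∀ t ∈ H, s * x' * t ∈ H := by
    intro s hs t ht
    rcases ht.2.1 with h | ⟨f, hf, hfe⟩
    · rw [← h, (aux_id S x hx' hs).2]; exact hs
    · rw [← hfe, ← mul_assoc, (aux_id S x hx' hs).2]
      exact aux_mapsTo S x hf (hfe ▸ ht) hs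
  -- left inverses
  have hlinv : ∀ s ∈ H, ∃ t ∈ H, t * x' * s = x := by
    intro s hs
    rcases hs.2.1 with h | ⟨f, hf, hfe⟩
    · exact ⟨x, hxH, by rw [← h, hx']⟩
    · have hbij := (Set.toFinite H).injOn_iff_bijOn_of_mapsTo
        (fun y hy => aux_mapsTo S x hf (hfe ▸ hs) hy) |>.mp
        (aux_injOn S x (hfe ▸ hs))
      obtain ⟨t, ht, hte⟩ := hbij.surjOn hxH
      exact ⟨t, ht, by rw [← hfe, ← mul_assoc, (aux_id S x hx' ht).2]; exact hte⟩
  -- two sided inverses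
  have hinv : ∀ s ∈ H, ∃ t ∈ H, s * x' * t = x ∧ t * x' * s = x := by
    intro s hs
    obtain ⟨t, ht, hts⟩ := hlinv s hs
    obtain ⟨u, hu, hut⟩ := hlinv t ht
    have hst : s * x' * t = x := by
      have h1 : x * x' * (s * x' * t) = s * x' * t :=
        (aux_id S x hx' (hclosure s hs t ht)).1
      calc s * x' * t = x * x' * (s * x' * t) := h1.symm
        _ = (u * x' * t) * x' * (s * x' * t) := by rw [hut]
        _ = u * x' * ((t * x' * s) * x' * t) := by simp only [mul_assoc]
        _ = u * x' * (x * x' * t) := by rw [hts]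
        _ = u * x' * t := by rw [(aux_id S x hx' ht).1]
        _ = x := hut
    exact ⟨t, ht, hst, hts⟩
  -- elements of the stabiliser map x into H
  have hact : ∀ o ∈ StabOfH S x, act1 S x o ∈ H := by
    intro o ho
    have := Set.mem_image_of_mem (fun y => act1 S y o) hxH
    rwa [ho] at this
  refine ⟨⟨hxH, hclosure, fun s hs => aux_id S x hx' hs, hinv,
      fun s t u => by simp only [mul_assoc]⟩, hact, ?_, ?_, ?_⟩
  · -- injectivity / kernel characterisation
    intro o ho p hp
    constructor
    · intro h; exact h x hxH
    · intro h y hy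
      rcases hy.1.1 with rfl | ⟨u1, -, rfl⟩
      · exact h
      · have key : ∀ q : Option ↥S, act1 S (u1 * x) q = u1 * act1 S x q := by
          intro q; cases q with
          | none => rfl
          | some s => exact mul_assoc u1 x s
        rw [key o, key p, h]
  · -- surjectivity
    intro g hg
    rcases hg.2.1 with h | ⟨f, hf, hfe⟩
    · refine ⟨none, ?_, h⟩
      show (fun y => act1 S y none) '' H = H
      simp only [act1, Option.elim]; exact Set.image_id H
    · refine ⟨some ⟨f, hf⟩, ?_, hfe⟩
      show (fun y => act1 S y (some ⟨f, hf⟩)) '' H = H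
      exact aux_image S x hf (hfe ▸ hg)
  · -- multiplicativity
    intro o ho p hp
    have hxo : act1 S x o ∈ H := hact o ho
    cases p with
    | none => exact ((aux_id S x hx' hxo).2).symm
    | some s =>
      show act1 S x o * s = act1 S x o * x' * (x * s)
      rw [← mul_assoc, (aux_id S x hx' hxo).2]
end

section
/- Let U be a finite semigroup, S a subsemigroup, and x ∈ S regular in S (there is x' ∈ S with x x' x = x). Then the three groups H_x^S (under s*t = sx't), S_{L_x^U} (the quotient of Stab_S(L_x^U) by the kernel of its action on L_x^U) and the corresponding left stabiliser group of R_x^U are pairwise isomorphic. -/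
variable {U : Type*}

/-! ### Auxiliary lemmas -/

section Aux

open Function Set

variable [Semigroup U]

/-- Iterated cancellation for a map injective on a set. -/
lemma aux_iter_cancel {α : Type*} {L : Set α} {f : α → α} (hm : Set.MapsTo f L L)
    (hi : Set.InjOn f L) : ∀ m, ∀ a ∈ L, ∀ b ∈ L, f^[m] a = f^[m] b → a = b := by
  intro m
  induction m with
  | zero => intro a _ b _ h; simpa using h
  | succ m ih =>
    intro a ha b hb h
    rw [Function.iterate_succ_apply, Function.iterate_succ_apply] at h
    exact hi ha hb (ih _ (hm ha) _ (hm hb) h)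

/-- A bijection of a finite set has a positive-power fixed point at every point. -/
lemma aux_exists_fix {α : Type*} [Finite α] {L : Set α} {f : α → α}
    (hm : Set.MapsTo f L L) (hi : Set.InjOn f L) {x : α} (hxL : x ∈ L) :
    ∃ n : ℕ, f^[n + 1] x = x := by
  obtain ⟨k, l, hkl, h⟩ := Finite.exists_ne_map_eq_of_infinite (fun k : ℕ => f^[k] x)
  wlog hlt : k < l generalizing k l
  · exact this l k hkl.symm h.symm (by omega)
  have hb : f^[l - k] x ∈ L := hm.iterate (l - k) hxL
  have : f^[k] x = f^[k] (f^[l - k] x) := by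
    rw [← Function.iterate_add_apply]
    rw [show k + (l - k) = l by omega]
    exact h
  have hx2 : x = f^[l - k] x := aux_iter_cancel hm hi k x hxL _ hb this
  refine ⟨l - k - 1, ?_⟩
  rw [show l - k - 1 + 1 = l - k by omega]
  exact hx2.symm

/-- Powers of `s` acting on the right, staying in `S` and commuting with `s`. -/
lemma aux_pow_right (S : Subsemigroup U) {s : U} (hs : s ∈ S) :
    ∀ k : ℕ, ∃ c ∈ S, (∀ y : U, (fun y => y * s)^[k + 1] y = y * c) ∧ c * s = s * c := by
  intro k
  induction k with
  | zero => exact ⟨s, hs, fun y => rfl, rfl⟩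
  | succ k ih =>
    obtain ⟨c, hc, hiter, hcomm⟩ := ih
    refine ⟨c * s, S.mul_mem hc hs, fun y => ?_, ?_⟩
    · rw [Function.iterate_succ_apply', hiter, mul_assoc]
    · rw [hcomm, mul_assoc, hcomm]

/-- Powers of `s` acting on the left. -/
lemma aux_pow_left (S : Subsemigroup U) {s : U} (hs : s ∈ S) :
    ∀ k : ℕ, ∃ c ∈ S, (∀ y : U, (fun y => s * y)^[k + 1] y = c * y) ∧ c * s = s * c := by
  intro k
  induction k with
  | zero => exact ⟨s, hs, fun y => rfl, rfl⟩
  | succ k ih =>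
    obtain ⟨c, hc, hiter, hcomm⟩ := ih
    refine ⟨s * c, S.mul_mem hs hc, fun y => ?_, ?_⟩
    · rw [Function.iterate_succ_apply', hiter, mul_assoc]
    · rw [mul_assoc, hcomm]

/-- Weakening the multiplier set to `univ`. -/
lemma aux_GreenL_weaken {T : Set U} {a b : U} (h : GreenL T a b) : GreenL Set.univ a b := by
  obtain ⟨h1, h2⟩ := h
  constructor
  · rcases h1 with h | ⟨c, _, hc⟩
    · exact Or.inl h
    · exact Or.inr ⟨c, trivial, hc⟩
  · rcases h2 with h | ⟨c, _, hc⟩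
    · exact Or.inl h
    · exact Or.inr ⟨c, trivial, hc⟩

lemma aux_GreenR_weaken {T : Set U} {a b : U} (h : GreenR T a b) : GreenR Set.univ a b := by
  obtain ⟨h1, h2⟩ := h
  constructor
  · rcases h1 with h | ⟨c, _, hc⟩
    · exact Or.inl h
    · exact Or.inr ⟨c, trivial, hc⟩
  · rcases h2 with h | ⟨c, _, hc⟩
    · exact Or.inl h
    · exact Or.inr ⟨c, trivial, hc⟩

/-- `L^U` is transitive. -/
lemma aux_GreenL_trans {a b c : U} (h1 : GreenL Set.univ a b) (h2 : GreenL Set.univ b c) :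
    GreenL Set.univ a c := by
  obtain ⟨h11, h12⟩ := h1; obtain ⟨h21, h22⟩ := h2
  constructor
  · rcases h11 with h | ⟨u, _, hu⟩ <;> rcases h21 with h' | ⟨v, _, hv⟩
    · exact Or.inl (h.trans h')
    · exact Or.inr ⟨v, trivial, by rw [h]; exact hv⟩
    · exact Or.inr ⟨u, trivial, hu.trans h'⟩
    · exact Or.inr ⟨v * u, trivial, by rw [mul_assoc, hu, hv]⟩
  · rcases h12 with h | ⟨u, _, hu⟩ <;> rcases h22 with h' | ⟨v, _, hv⟩
    · exact Or.inl (h'.trans h)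
    · exact Or.inr ⟨v, trivial, hv.trans h⟩
    · exact Or.inr ⟨u, trivial, by rw [h']; exact hu⟩
    · exact Or.inr ⟨u * v, trivial, by rw [mul_assoc, hv, hu]⟩

lemma aux_GreenR_trans {a b c : U} (h1 : GreenR Set.univ a b) (h2 : GreenR Set.univ b c) :
    GreenR Set.univ a c := by
  obtain ⟨h11, h12⟩ := h1; obtain ⟨h21, h22⟩ := h2
  constructor
  · rcases h11 with h | ⟨u, _, hu⟩ <;> rcases h21 with h' | ⟨v, _, hv⟩
    · exact Or.inl (h.trans h')
    · exact Or.inr ⟨v, trivial, by rw [h]; exact hv⟩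
    · exact Or.inr ⟨u, trivial, hu.trans h'⟩
    · exact Or.inr ⟨u * v, trivial, by rw [← mul_assoc, hu, hv]⟩
  · rcases h12 with h | ⟨u, _, hu⟩ <;> rcases h22 with h' | ⟨v, _, hv⟩
    · exact Or.inl (h'.trans h)
    · exact Or.inr ⟨v, trivial, hv.trans h⟩
    · exact Or.inr ⟨u, trivial, by rw [h']; exact hu⟩
    · exact Or.inr ⟨v * u, trivial, by rw [← mul_assoc, hv, hu]⟩

/-- `L` is a right congruence. -/
lemma aux_GreenL_mul_right {T : Set U} {a b : U} (h : GreenL T a b) (w : U) :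
    GreenL T (a * w) (b * w) := by
  obtain ⟨h1, h2⟩ := h
  constructor
  · rcases h1 with h | ⟨c, hc, hc'⟩
    · exact Or.inl (by rw [h])
    · exact Or.inr ⟨c, hc, by rw [← mul_assoc, hc']⟩
  · rcases h2 with h | ⟨c, hc, hc'⟩
    · exact Or.inl (by rw [h])
    · exact Or.inr ⟨c, hc, by rw [← mul_assoc, hc']⟩

/-- `R` is a left congruence. -/
lemma aux_GreenR_mul_left {T : Set U} {a b : U} (h : GreenR T a b) (w : U) :
    GreenR T (w * a) (w * b) := by
  obtain ⟨h1, h2⟩ := h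
  constructor
  · rcases h1 with h | ⟨c, hc, hc'⟩
    · exact Or.inl (by rw [h])
    · exact Or.inr ⟨c, hc, by rw [mul_assoc, hc']⟩
  · rcases h2 with h | ⟨c, hc, hc'⟩
    · exact Or.inl (by rw [h])
    · exact Or.inr ⟨c, hc, by rw [mul_assoc, hc']⟩

end Aux

section Aux2

variable [Semigroup U] {S : Subsemigroup U} {x x' : U}

lemma aux_hB (hreg : x * x' * x = x) : x * (x' * x) = x := by rw [← mul_assoc, hreg]

lemma aux_lid_s11 (hreg : x * x' * x = x) {y : U} (h : x = y ∨ ∃ a : U, x * a = y) :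
    x * (x' * y) = y := by
  rcases h with h | ⟨a, h⟩
  · subst h; exact aux_hB hreg
  · rw [← h]; simp only [← mul_assoc]; rw [hreg]

lemma aux_rid_s11 (hreg : x * x' * x = x) {y : U} (h : x = y ∨ ∃ a : U, a * x = y) :
    y * (x' * x) = y := by
  rcases h with h | ⟨a, h⟩
  · subst h; exact aux_hB hreg
  · rw [← h, mul_assoc, aux_hB hreg]

lemma aux_H_refl : GreenH (S : Set U) x x :=
  ⟨⟨Or.inl rfl, Or.inl rfl⟩, Or.inl rfl, Or.inl rfl⟩

lemma aux_Hlid (hreg : x * x' * x = x) {s : U} (hs : GreenH (S : Set U) x s) :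
    x * (x' * s) = s := by
  refine aux_lid_s11 hreg ?_
  rcases hs.2.1 with h | ⟨a, _, h⟩
  · exact Or.inl h
  · exact Or.inr ⟨a, h⟩

lemma aux_Hrid (hreg : x * x' * x = x) {s : U} (hs : GreenH (S : Set U) x s) :
    s * (x' * x) = s := by
  refine aux_rid_s11 hreg ?_
  rcases hs.1.1 with h | ⟨a, _, h⟩
  · exact Or.inl h
  · exact Or.inr ⟨a, h⟩

lemma aux_H_memS (hx : x ∈ S) {s : U} (hs : GreenH (S : Set U) x s) : s ∈ S := by
  rcases hs.2.1 with h | ⟨a, ha, h⟩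
  · exact h ▸ hx
  · exact h ▸ S.mul_mem hx ha

lemma aux_H_mul (hx : x ∈ S) (hx' : x' ∈ S) (hreg : x * x' * x = x)
    {s t : U} (hs : GreenH (S : Set U) x s) (ht : GreenH (S : Set U) x t) :
    GreenH (S : Set U) x (s * x' * t) := by
  have hsid : s * x' * x = s := by rw [mul_assoc]; exact aux_Hrid hreg hs
  have htid : x * x' * t = t := by rw [mul_assoc]; exact aux_Hlid hreg ht
  refine ⟨⟨?_, ?_⟩, ?_, ?_⟩
  · -- lS x (s * x' * t)
    rcases ht.1.1 with h | ⟨b, hb, h⟩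
    · subst h; rw [hsid]; exact hs.1.1
    · refine Or.inr ⟨s * (x' * b), S.mul_mem (aux_H_memS hx hs) (S.mul_mem hx' hb), ?_⟩
      rw [← h]; simp only [mul_assoc]
  · -- lS (s * x' * t) x
    rcases hs.1.2 with h | ⟨d, hd, h⟩
    · subst h; rw [htid]; exact ht.1.2
    · have key : d * (s * x' * t) = t := by
        simp only [← mul_assoc]; rw [h, htid]
      rcases ht.1.2 with h' | ⟨e, he, h'⟩
      · exact Or.inr ⟨d, hd, key.trans h'⟩
      · exact Or.inr ⟨e * d, S.mul_mem he hd, by rw [mul_assoc, key]; exact h'⟩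
  · -- rS x (s * x' * t)
    rcases hs.2.1 with h | ⟨a, ha, h⟩
    · subst h; rw [htid]; exact ht.2.1
    · refine Or.inr ⟨a * (x' * t), S.mul_mem ha (S.mul_mem hx' (aux_H_memS hx ht)), ?_⟩
      rw [← h]; simp only [mul_assoc]
  · -- rS (s * x' * t) x
    rcases ht.2.2 with h | ⟨c, hc, h⟩
    · subst h; rw [hsid]; exact hs.2.2
    · have key : s * x' * t * c = s := by
        rw [mul_assoc (s * x'), h, hsid]
      rcases hs.2.2 with h' | ⟨u, hu, h'⟩
      · exact Or.inr ⟨c, hc, key.trans h'⟩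
      · exact Or.inr ⟨c * u, S.mul_mem hc hu, by rw [← mul_assoc, key]; exact h'⟩

lemma aux_H_inv [Finite U] (hx : x ∈ S) (hx' : x' ∈ S) (hreg : x * x' * x = x)
    {s : U} (hs : GreenH (S : Set U) x s) :
    ∃ t, GreenH (S : Set U) x t ∧ s * x' * t = x ∧ t * x' * s = x := by
  set H := {z | GreenH (S : Set U) x z} with hH
  have hmaps : Set.MapsTo (fun t => s * x' * t) H H := fun t ht =>
    aux_H_mul hx hx' hreg hs ht
  have hinj : Set.InjOn (fun t => s * x' * t) H := by
    intro t ht t' ht' h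
    simp only at h
    have ht1 : x * x' * t = t := by rw [mul_assoc]; exact aux_Hlid hreg ht
    have ht1' : x * x' * t' = t' := by rw [mul_assoc]; exact aux_Hlid hreg ht'
    rcases hs.1.2 with h0 | ⟨d, hd, h0⟩
    · subst h0
      rw [← ht1, ← ht1']
      exact h
    · calc t = x * x' * t := ht1.symm
        _ = d * (s * x' * t) := by rw [← h0]; simp only [mul_assoc]
        _ = d * (s * x' * t') := by rw [h]
        _ = x * x' * t' := by rw [← h0]; simp only [mul_assoc]
        _ = t' := ht1'
  have hsurj : Set.SurjOn (fun t => s * x' * t) H H :=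
    (((Set.toFinite H).injOn_iff_bijOn_of_mapsTo hmaps).mp hinj).surjOn
  obtain ⟨t, htH, hfeq⟩ := hsurj (show x ∈ H from aux_H_refl)
  simp only at hfeq
  have ht : GreenH (S : Set U) x t := htH
  refine ⟨t, ht, hfeq, ?_⟩
  -- now show t * x' * s = x
  have huH : GreenH (S : Set U) x (t * x' * s) := aux_H_mul hx hx' hreg ht hs
  have hurid : (t * x' * s) * (x' * x) = t * x' * s := aux_Hrid hreg huH
  have hxrid : x * (x' * x) = x := aux_hB hreg
  have hcomp : (t * x' * s) * (x' * t) = x * (x' * t) := by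
    have e1 : (t * x' * s) * (x' * t) = t * x' * (s * x' * t) := by
      simp only [mul_assoc]
    rw [e1, hfeq, mul_assoc, aux_Hrid hreg ht]
    exact (aux_Hlid hreg ht).symm
  -- right cancellation by t
  rcases ht.2.2 with h0 | ⟨c, hc, h0⟩
  · -- t = x
    have hs_eq : s = x := by
      rw [← hfeq, h0, mul_assoc, aux_Hrid hreg hs]
    rw [h0, hs_eq]; exact hreg
  · calc t * x' * s = (t * x' * s) * (x' * x) := hurid.symm
      _ = (t * x' * s) * (x' * (t * c)) := by rw [h0]
      _ = ((t * x' * s) * (x' * t)) * c := by simp only [mul_assoc]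
      _ = (x * (x' * t)) * c := by rw [hcomp]
      _ = x * (x' * (t * c)) := by simp only [mul_assoc]
      _ = x * (x' * x) := by rw [h0]
      _ = x := hxrid

end Aux2

section Aux3

variable [Semigroup U] {S : Subsemigroup U} {x x' : U}

lemma aux_mem_Lcl_self : x ∈ Lcl x := ⟨Or.inl rfl, Or.inl rfl⟩

lemma aux_mem_Rcl_self : x ∈ RclU x := ⟨Or.inl rfl, Or.inl rfl⟩

lemma aux_Lcl_rid (hreg : x * x' * x = x) {y : U} (hy : y ∈ Lcl x) :
    y * (x' * x) = y := by
  refine aux_rid_s11 hreg ?_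
  rcases hy.1 with h | ⟨a, _, h⟩
  · exact Or.inl h
  · exact Or.inr ⟨a, h⟩

lemma aux_Rcl_lid (hreg : x * x' * x = x) {y : U} (hy : y ∈ RclU x) :
    x * (x' * y) = y := by
  refine aux_lid_s11 hreg ?_
  rcases hy.1 with h | ⟨a, _, h⟩
  · exact Or.inl h
  · exact Or.inr ⟨a, h⟩

lemma aux_act1_left (o : Option ↥S) (a y : U) :
    act1 S (a * y) o = a * act1 S y o := by
  cases o <;> simp [act1, mul_assoc]

lemma aux_act1L_right (o : Option ↥S) (a y : U) :
    act1L S o (y * a) = act1L S o y * a := by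
  cases o <;> simp [act1L, mul_assoc]

lemma aux_exists_left_w (hx : x ∈ S) (hx' : x' ∈ S) {s : U} (hsS : s ∈ S)
    (hv : (x * s) * (x' * x) = x * s) :
    ∀ k, ∃ w ∈ S, w * x = (fun y : U => y * s)^[k + 1] x := by
  intro k
  induction k with
  | zero =>
    refine ⟨x * (s * x'), S.mul_mem hx (S.mul_mem hsS hx'), ?_⟩
    rw [Function.iterate_one]
    calc x * (s * x') * x = (x * s) * (x' * x) := by simp only [mul_assoc]
      _ = x * s := hv
  | succ k ih =>
    obtain ⟨w, hwS, hw⟩ := ih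
    obtain ⟨c, hcS, hiter, hcomm⟩ := aux_pow_right S hsS k
    refine ⟨x * (s * x') * w, S.mul_mem (S.mul_mem hx (S.mul_mem hsS hx')) hwS, ?_⟩
    have h1 : (fun y : U => y * s)^[k + 1] x = x * c := hiter x
    calc x * (s * x') * w * x = x * (s * x') * (w * x) := by rw [mul_assoc]
      _ = x * (s * x') * (x * c) := by rw [hw, h1]
      _ = ((x * s) * (x' * x)) * c := by simp only [mul_assoc]
      _ = (x * s) * c := by rw [hv]
      _ = x * (c * s) := by rw [mul_assoc, hcomm]
      _ = (x * c) * s := by rw [← mul_assoc]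
      _ = (fun y : U => y * s)^[k + 1 + 1] x := by
          rw [Function.iterate_succ_apply', h1]

lemma aux_exists_right_w (hx : x ∈ S) (hx' : x' ∈ S) {s : U} (hsS : s ∈ S)
    (hv : x * (x' * (s * x)) = s * x) :
    ∀ k, ∃ w ∈ S, x * w = (fun y : U => s * y)^[k + 1] x := by
  intro k
  induction k with
  | zero =>
    refine ⟨x' * (s * x), S.mul_mem hx' (S.mul_mem hsS hx), ?_⟩
    rw [Function.iterate_one]
    exact hv
  | succ k ih =>
    obtain ⟨w, hwS, hw⟩ := ih
    obtain ⟨c, hcS, hiter, hcomm⟩ := aux_pow_left S hsS k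
    refine ⟨w * (x' * (s * x)), S.mul_mem hwS (S.mul_mem hx' (S.mul_mem hsS hx)), ?_⟩
    have h1 : (fun y : U => s * y)^[k + 1] x = c * x := hiter x
    calc x * (w * (x' * (s * x))) = (x * w) * (x' * (s * x)) := by rw [← mul_assoc]
      _ = (c * x) * (x' * (s * x)) := by rw [hw, h1]
      _ = c * (x * (x' * (s * x))) := by rw [mul_assoc]
      _ = c * (s * x) := by rw [hv]
      _ = (c * s) * x := by rw [← mul_assoc]
      _ = (s * c) * x := by rw [hcomm]
      _ = s * (c * x) := by rw [mul_assoc]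
      _ = (fun y : U => s * y)^[k + 1 + 1] x := by
          rw [Function.iterate_succ_apply', h1]

lemma aux_stabL_H [Finite U] (hx : x ∈ S) (hx' : x' ∈ S) (hreg : x * x' * x = x)
    {s : U} (hsS : s ∈ S) (ho : (fun y : U => y * s) '' Lcl x = Lcl x) :
    GreenH (S : Set U) x (x * s) := by
  have hmaps : Set.MapsTo (fun y : U => y * s) (Lcl x) (Lcl x) := fun y hy =>
    ho ▸ Set.mem_image_of_mem _ hy
  have hsurj : Set.SurjOn (fun y : U => y * s) (Lcl x) (Lcl x) := by
    rw [Set.SurjOn, ho]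
  have hinj : Set.InjOn (fun y : U => y * s) (Lcl x) :=
    (((Set.toFinite _).surjOn_iff_bijOn_of_mapsTo hmaps).mp hsurj).injOn
  obtain ⟨n, hn⟩ := aux_exists_fix hmaps hinj (aux_mem_Lcl_self (x := x))
  have hxs_mem : x * s ∈ Lcl x := hmaps aux_mem_Lcl_self
  have hxs_rid : (x * s) * (x' * x) = x * s := aux_Lcl_rid hreg hxs_mem
  refine ⟨⟨?_, ?_⟩, ?_, ?_⟩
  · -- x is a left S-multiple giving x*s
    refine Or.inr ⟨x * s * x', S.mul_mem (S.mul_mem hx hsS) hx', ?_⟩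
    rw [mul_assoc (x * s)]; exact hxs_rid
  · -- x is a left S-multiple of x*s
    cases n with
    | zero => exact Or.inl hn
    | succ m =>
      obtain ⟨w, hwS, hw⟩ := aux_exists_left_w hx hx' hsS hxs_rid m
      refine Or.inr ⟨w, hwS, ?_⟩
      rw [← mul_assoc, hw]
      exact (Function.iterate_succ_apply' (fun y : U => y * s) (m + 1) x).symm.trans hn
  · exact Or.inr ⟨s, hsS, rfl⟩
  · cases n with
    | zero => exact Or.inl hn
    | succ m =>
      obtain ⟨c, hcS, hiter, _⟩ := aux_pow_right S hsS m
      refine Or.inr ⟨c, hcS, ?_⟩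
      rw [← hiter (x * s)]
      exact (Function.iterate_succ_apply (fun y : U => y * s) (m + 1) x).symm.trans hn

lemma aux_stabR_H [Finite U] (hx : x ∈ S) (hx' : x' ∈ S) (hreg : x * x' * x = x)
    {s : U} (hsS : s ∈ S) (ho : (fun y : U => s * y) '' RclU x = RclU x) :
    GreenH (S : Set U) x (s * x) := by
  have hmaps : Set.MapsTo (fun y : U => s * y) (RclU x) (RclU x) := fun y hy =>
    ho ▸ Set.mem_image_of_mem _ hy
  have hsurj : Set.SurjOn (fun y : U => s * y) (RclU x) (RclU x) := by
    rw [Set.SurjOn, ho]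
  have hinj : Set.InjOn (fun y : U => s * y) (RclU x) :=
    (((Set.toFinite _).surjOn_iff_bijOn_of_mapsTo hmaps).mp hsurj).injOn
  obtain ⟨n, hn⟩ := aux_exists_fix hmaps hinj (aux_mem_Rcl_self (x := x))
  have hsx_mem : s * x ∈ RclU x := hmaps aux_mem_Rcl_self
  have hsx_lid : x * (x' * (s * x)) = s * x := aux_Rcl_lid hreg hsx_mem
  refine ⟨⟨?_, ?_⟩, ?_, ?_⟩
  · exact Or.inr ⟨s, hsS, rfl⟩
  · cases n with
    | zero => exact Or.inl hn
    | succ m =>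
      obtain ⟨c, hcS, hiter, _⟩ := aux_pow_left S hsS m
      refine Or.inr ⟨c, hcS, ?_⟩
      rw [← hiter (s * x)]
      exact (Function.iterate_succ_apply (fun y : U => s * y) (m + 1) x).symm.trans hn
  · exact Or.inr ⟨x' * (s * x), S.mul_mem hx' (S.mul_mem hsS hx), hsx_lid⟩
  · cases n with
    | zero => exact Or.inl hn
    | succ m =>
      obtain ⟨w, hwS, hw⟩ := aux_exists_right_w hx hx' hsS hsx_lid m
      refine Or.inr ⟨w, hwS, ?_⟩
      rw [mul_assoc, hw]
      exact (Function.iterate_succ_apply' (fun y : U => s * y) (m + 1) x).symm.trans hn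

lemma aux_stabL_of_H [Finite U] (hreg : x * x' * x = x) {a : U} (haS : a ∈ S)
    (hg : GreenH (S : Set U) x (x * a)) :
    (fun y : U => y * a) '' Lcl x = Lcl x := by
  have hmaps : Set.MapsTo (fun y : U => y * a) (Lcl x) (Lcl x) := by
    intro y hy
    exact aux_GreenL_trans (aux_GreenL_weaken hg.1) (aux_GreenL_mul_right hy a)
  have ht : x * a = x ∨ ∃ t ∈ (S : Set U), x * a * t = x := by
    rcases hg.2.2 with h | ⟨t, htS, hteq⟩
    · exact Or.inl h
    · exact Or.inr ⟨t, htS, hteq⟩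
  have hinj : Set.InjOn (fun y : U => y * a) (Lcl x) := by
    intro y hy y' hy' h
    simp only at h
    rcases ht with h0 | ⟨t, htS, h0⟩
    · have e : ∀ z, z ∈ Lcl x → z * a = z := by
        intro z hz
        rcases hz.1 with hz1 | ⟨c, _, hz1⟩
        · rw [← hz1]; exact h0
        · rw [← hz1, mul_assoc, h0]
      rw [← e y hy, ← e y' hy', h]
    · have e : ∀ z, z ∈ Lcl x → z * (a * t) = z := by
        intro z hz
        rcases hz.1 with hz1 | ⟨c, _, hz1⟩
        · rw [← hz1, ← mul_assoc]; exact h0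
        · rw [← hz1, mul_assoc c x (a * t), ← mul_assoc x a t, h0]
      calc y = y * (a * t) := (e y hy).symm
        _ = (y * a) * t := by rw [← mul_assoc]
        _ = (y' * a) * t := by rw [h]
        _ = y' * (a * t) := by rw [mul_assoc]
        _ = y' := e y' hy'
  have hsurj : Set.SurjOn (fun y : U => y * a) (Lcl x) (Lcl x) :=
    (((Set.toFinite _).injOn_iff_bijOn_of_mapsTo hmaps).mp hinj).surjOn
  exact Set.Subset.antisymm hmaps.image_subset hsurj

lemma aux_stabR_of_H [Finite U] (hreg : x * x' * x = x) {a : U} (haS : a ∈ S)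
    (hg : GreenH (S : Set U) x (a * x)) :
    (fun y : U => a * y) '' RclU x = RclU x := by
  have hmaps : Set.MapsTo (fun y : U => a * y) (RclU x) (RclU x) := by
    intro y hy
    exact aux_GreenR_trans (aux_GreenR_weaken hg.2) (aux_GreenR_mul_left hy a)
  have ht : a * x = x ∨ ∃ t ∈ (S : Set U), t * (a * x) = x := by
    rcases hg.1.2 with h | ⟨t, htS, hteq⟩
    · exact Or.inl h
    · exact Or.inr ⟨t, htS, hteq⟩
  have hinj : Set.InjOn (fun y : U => a * y) (RclU x) := by
    intro y hy y' hy' h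
    simp only at h
    rcases ht with h0 | ⟨t, htS, h0⟩
    · have e : ∀ z, z ∈ RclU x → a * z = z := by
        intro z hz
        rcases hz.1 with hz1 | ⟨c, _, hz1⟩
        · rw [← hz1]; exact h0
        · rw [← hz1, ← mul_assoc, h0]
      rw [← e y hy, ← e y' hy', h]
    · have e : ∀ z, z ∈ RclU x → t * (a * z) = z := by
        intro z hz
        rcases hz.1 with hz1 | ⟨c, _, hz1⟩
        · rw [← hz1]; exact h0
        · rw [← hz1, show a * (x * c) = (a * x) * c from (mul_assoc a x c).symm,
            ← mul_assoc, h0]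
      calc y = t * (a * y) := (e y hy).symm
        _ = t * (a * y') := by rw [h]
        _ = y' := e y' hy'
  have hsurj : Set.SurjOn (fun y : U => a * y) (RclU x) (RclU x) :=
    (((Set.toFinite _).injOn_iff_bijOn_of_mapsTo hmaps).mp hinj).surjOn
  exact Set.Subset.antisymm hmaps.image_subset hsurj

end Aux3
/-- If `x ∈ S` is regular in `S` (there is `x' ∈ S` with `x x' x = x`), then the
three groups `H_x^S` (under `s * t = s x' t`), `S_{L_x^U}` (the quotient of
`Stab_S(L_x^U)` by the kernel of its right action on `L_x^U`) and the left
stabiliser group of `R_x^U` are pairwise isomorphic.  Here this is expressed by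
saying that `H_x^S` is a group under `s * t = s x' t` with identity `x` and that
the maps `s ↦ x s` and `t ↦ t x` induce isomorphisms from the two stabiliser
quotients onto `H_x^S`. -/
theorem three_groups_isomorphic [Semigroup U] [Finite U]
    (S : Subsemigroup U) (x x' : U) (hx : x ∈ S) (hx' : x' ∈ S)
    (hreg : x * x' * x = x) :
    -- `H_x^S` is a group under `s * t = s x' t` with identity `x`
    (x ∈ {z | GreenH (S : Set U) x z} ∧
     (∀ s ∈ {z | GreenH (S : Set U) x z}, ∀ t ∈ {z | GreenH (S : Set U) x z},
        s * x' * t ∈ {z | GreenH (S : Set U) x z}) ∧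
     (∀ s ∈ {z | GreenH (S : Set U) x z}, x * x' * s = s ∧ s * x' * x = s) ∧
     (∀ s ∈ {z | GreenH (S : Set U) x z}, ∃ t ∈ {z | GreenH (S : Set U) x z},
        s * x' * t = x ∧ t * x' * s = x)) ∧
    -- `s ↦ x s` induces an isomorphism from `S_{L_x^U}` onto `H_x^S`
    ((∀ o ∈ StabOfL S x, act1 S x o ∈ {z | GreenH (S : Set U) x z}) ∧
     (∀ o ∈ StabOfL S x, ∀ p ∈ StabOfL S x,
        ((∀ y ∈ Lcl x, act1 S y o = act1 S y p) ↔ act1 S x o = act1 S x p)) ∧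
     (∀ g ∈ {z | GreenH (S : Set U) x z}, ∃ o ∈ StabOfL S x, act1 S x o = g) ∧
     (∀ o ∈ StabOfL S x, ∀ p ∈ StabOfL S x,
        act1 S (act1 S x o) p = act1 S x o * x' * act1 S x p)) ∧
    -- `t ↦ t x` induces an isomorphism from the left stabiliser group of `R_x^U`
    -- onto `H_x^S`
    ((∀ o ∈ StabOfR S x, act1L S o x ∈ {z | GreenH (S : Set U) x z}) ∧
     (∀ o ∈ StabOfR S x, ∀ p ∈ StabOfR S x,
        ((∀ y ∈ RclU x, act1L S o y = act1L S p y) ↔ act1L S o x = act1L S p x)) ∧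
     (∀ g ∈ {z | GreenH (S : Set U) x z}, ∃ o ∈ StabOfR S x, act1L S o x = g) ∧
     (∀ o ∈ StabOfR S x, ∀ p ∈ StabOfR S x,
        act1L S o (act1L S p x) = act1L S o x * x' * act1L S p x)) := by

  have hB : x * (x' * x) = x := aux_hB hreg
  refine ⟨⟨?_, ?_, ?_, ?_⟩, ⟨?_, ?_, ?_, ?_⟩, ⟨?_, ?_, ?_, ?_⟩⟩
  · exact aux_H_refl
  · intro s hs t ht
    exact aux_H_mul hx hx' hreg hs ht
  · intro s hs
    constructor
    · rw [mul_assoc]; exact aux_Hlid hreg hs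
    · rw [mul_assoc]; exact aux_Hrid hreg hs
  · intro s hs
    obtain ⟨t, ht, h1, h2⟩ := aux_H_inv hx hx' hreg hs
    exact ⟨t, ht, h1, h2⟩
  -- part 2
  · rintro (_ | ⟨s, hsS⟩) ho
    · exact aux_H_refl
    · exact aux_stabL_H hx hx' hreg hsS ho
  · intro o ho p hp
    constructor
    · intro h
      exact h x aux_mem_Lcl_self
    · intro h y hy
      rcases hy.1 with h1 | ⟨a, _, h1⟩
      · rw [← h1]; exact h
      · rw [← h1, aux_act1_left, aux_act1_left, h]
  · intro g hg
    rcases hg.2.1 with h | ⟨a, haS, h⟩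
    · exact ⟨none, Set.image_id' _, h⟩
    · exact ⟨some ⟨a, haS⟩, aux_stabL_of_H hreg haS (by rw [h]; exact hg), h⟩
  · rintro (_ | ⟨s, hsS⟩) ho (_ | ⟨t, htS⟩) hp
    · exact hreg.symm
    · show x * (t : U) = x * x' * (x * t)
      rw [← mul_assoc (x * x') x (t : U), hreg]
    · show x * (s : U) = x * s * x' * x
      have hos : x * (s : U) ∈ Lcl x := ho ▸ Set.mem_image_of_mem _ aux_mem_Lcl_self
      rw [mul_assoc (x * (s : U))]
      exact (aux_Lcl_rid hreg hos).symm
    · show x * (s : U) * t = x * s * x' * (x * t)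
      have hos : x * (s : U) ∈ Lcl x := ho ▸ Set.mem_image_of_mem _ aux_mem_Lcl_self
      calc x * (s : U) * t = (x * (s : U) * (x' * x)) * t := by
            rw [aux_Lcl_rid hreg hos]
        _ = x * s * x' * (x * t) := by simp only [mul_assoc]
  -- part 3
  · rintro (_ | ⟨s, hsS⟩) ho
    · exact aux_H_refl
    · exact aux_stabR_H hx hx' hreg hsS ho
  · intro o ho p hp
    constructor
    · intro h
      exact h x aux_mem_Rcl_self
    · intro h y hy
      rcases hy.1 with h1 | ⟨a, _, h1⟩
      · rw [← h1]; exact h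
      · rw [← h1, aux_act1L_right, aux_act1L_right, h]
  · intro g hg
    rcases hg.1.1 with h | ⟨a, haS, h⟩
    · exact ⟨none, Set.image_id' _, h⟩
    · exact ⟨some ⟨a, haS⟩, aux_stabR_of_H hreg haS (by rw [h]; exact hg), h⟩
  · rintro (_ | ⟨s, hsS⟩) ho (_ | ⟨t, htS⟩) hp
    · exact hreg.symm
    · show (t : U) * x = x * x' * (t * x)
      have hpt : (t : U) * x ∈ RclU x := hp ▸ Set.mem_image_of_mem _ aux_mem_Rcl_self
      rw [mul_assoc]
      exact (aux_Rcl_lid hreg hpt).symm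
    · show (s : U) * x = s * x * x' * x
      calc (s : U) * x = s * (x * (x' * x)) := by rw [hB]
        _ = s * x * x' * x := by simp only [mul_assoc]
    · show (s : U) * (t * x) = s * x * x' * (t * x)
      have hpt : (t : U) * x ∈ RclU x := hp ▸ Set.mem_image_of_mem _ aux_mem_Rcl_self
      calc (s : U) * (t * x) = s * (x * (x' * (t * x))) := by
            rw [aux_Rcl_lid hreg hpt]
        _ = s * x * x' * (t * x) := by simp only [mul_assoc]
end

section
/- Let U be a finite semigroup, S a subsemigroup, and x, y ∈ S regular in U. If x R^S y, then |R_x^S| = |R_y^S|; moreover |R_x^S| equals the order of the group S_{L_x^U} multiplied by the number of L^U-classes in the strongly connected component of L_x^U under the right action of S on {L_z^U : z ∈ S}. -/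
variable {U : Type*}

section Aux

variable [Semigroup U]

private lemma greenL_iff {a b : U} :
    GreenL (Set.univ : Set U) a b ↔ (a = b ∨ ∃ u, u * a = b) ∧ (b = a ∨ ∃ u, u * b = a) := by
  simp [GreenL]

private lemma greenL_refl (a : U) : GreenL (Set.univ : Set U) a a :=
  greenL_iff.2 ⟨Or.inl rfl, Or.inl rfl⟩

private lemma greenL_symm {a b : U} (h : GreenL (Set.univ : Set U) a b) :
    GreenL (Set.univ : Set U) b a := ⟨h.2, h.1⟩

private lemma comp_trans {a b c : U} (h1 : a = b ∨ ∃ u, u * a = b)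
    (h2 : b = c ∨ ∃ u, u * b = c) : a = c ∨ ∃ u, u * a = c := by
  rcases h1 with rfl | ⟨u, rfl⟩
  · exact h2
  · rcases h2 with rfl | ⟨v, rfl⟩
    · exact Or.inr ⟨u, rfl⟩
    · exact Or.inr ⟨v * u, mul_assoc v u a⟩

private lemma greenL_trans {a b c : U} (h1 : GreenL (Set.univ : Set U) a b)
    (h2 : GreenL (Set.univ : Set U) b c) : GreenL (Set.univ : Set U) a c := by
  rw [greenL_iff] at *
  exact ⟨comp_trans h1.1 h2.1, comp_trans h2.2 h1.2⟩

private lemma mem_Lcl {a b : U} : b ∈ Lcl a ↔ GreenL (Set.univ : Set U) a b := Iff.rfl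

private lemma Lcl_eq_of_greenL {a b : U} (h : GreenL (Set.univ : Set U) a b) :
    Lcl a = Lcl b :=
  Set.ext fun _ => ⟨fun hw => greenL_trans (greenL_symm h) hw, fun hw => greenL_trans h hw⟩

private lemma greenL_of_Lcl_eq {a b : U} (h : Lcl a = Lcl b) :
    GreenL (Set.univ : Set U) a b := by
  have : b ∈ Lcl b := greenL_refl b
  rw [← h] at this
  exact this

private lemma greenL_mul_right {a b : U} (c : U) (h : GreenL (Set.univ : Set U) a b) :
    GreenL (Set.univ : Set U) (a * c) (b * c) := by
  rw [greenL_iff] at *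
  constructor
  · rcases h.1 with rfl | ⟨u, rfl⟩
    · exact Or.inl rfl
    · exact Or.inr ⟨u, (mul_assoc u a c).symm⟩
  · rcases h.2 with rfl | ⟨u, rfl⟩
    · exact Or.inl rfl
    · exact Or.inr ⟨u, (mul_assoc u b c).symm⟩

variable (S : Subsemigroup U)

private def omul (o p : Option ↥S) : Option ↥S :=
  match o, p with
  | none, p => p
  | some s, none => some s
  | some s, some t => some (s * t)

private lemma act1_omul (u : U) (o p : Option ↥S) :
    act1 S u (omul S o p) = act1 S (act1 S u o) p := by
  cases o <;> cases p <;> simp [act1, omul, mul_assoc]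

private lemma mul_act1 (u v : U) (o : Option ↥S) :
    u * act1 S v o = act1 S (u * v) o := by
  cases o <;> simp [act1, mul_assoc]

private lemma greenL_act1 {a b : U} (o : Option ↥S)
    (h : GreenL (Set.univ : Set U) a b) :
    GreenL (Set.univ : Set U) (act1 S a o) (act1 S b o) := by
  cases o with
  | none => exact h
  | some s => exact greenL_mul_right _ h

private def RE (a b : U) : Prop := ∃ o : Option ↥S, act1 S a o = b

private lemma RE_refl (a : U) : RE S a a := ⟨none, rfl⟩

private lemma RE_trans {a b c : U} (h1 : RE S a b) (h2 : RE S b c) : RE S a c := by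
  obtain ⟨o, rfl⟩ := h1
  obtain ⟨p, rfl⟩ := h2
  exact ⟨omul S o p, act1_omul S a o p⟩

private lemma greenR_iff {a b : U} :
    GreenR (S : Set U) a b ↔ RE S a b ∧ RE S b a := by
  constructor
  · rintro ⟨h1, h2⟩
    constructor
    · rcases h1 with rfl | ⟨c, hc, hce⟩
      · exact ⟨none, rfl⟩
      · exact ⟨some ⟨c, hc⟩, hce⟩
    · rcases h2 with rfl | ⟨c, hc, hce⟩
      · exact ⟨none, rfl⟩
      · exact ⟨some ⟨c, hc⟩, hce⟩
  · rintro ⟨⟨o, ho⟩, ⟨p, hp⟩⟩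
    constructor
    · cases o with
      | none => exact Or.inl ho
      | some s => exact Or.inr ⟨↑s, s.2, ho⟩
    · cases p with
      | none => exact Or.inl hp
      | some s => exact Or.inr ⟨↑s, s.2, hp⟩

private lemma mem_S_of_RE {a b : U} (ha : a ∈ S) (h : RE S a b) : b ∈ S := by
  obtain ⟨o, rfl⟩ := h
  cases o with
  | none => exact ha
  | some s => exact S.mul_mem ha s.2

end Aux

-- appended to aux for test
section Pump

variable [Semigroup U]

private def rep (x a : U) : ℕ → U
  | 0 => x
  | n + 1 => rep x a n * a

private lemma rep_mul_left (u x a : U) : ∀ n, u * rep x a n = rep (u * x) a n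
  | 0 => rfl
  | n + 1 => by
    show u * (rep x a n * a) = rep (u * x) a n * a
    rw [← mul_assoc, rep_mul_left u x a n]

private lemma rep_add (x a : U) (m : ℕ) : ∀ k, rep x a (m + k) = rep (rep x a m) a k
  | 0 => rfl
  | k + 1 => by
    show rep x a (m + k) * a = rep (rep x a m) a k * a
    rw [rep_add x a m k]

private lemma greenL_rep (x a : U) (h : GreenL (Set.univ : Set U) x (x * a)) :
    ∀ n, GreenL (Set.univ : Set U) x (rep x a n)
  | 0 => greenL_refl x
  | n + 1 => by
    have h1 : GreenL (Set.univ : Set U) (x * a) (rep x a n * a) :=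
      greenL_mul_right a (greenL_rep x a h n)
    exact greenL_trans h h1

private lemma pump [Finite U] (x a : U) (h : GreenL (Set.univ : Set U) x (x * a)) :
    ∃ k, rep x a (k + 1) = x := by
  suffices H : ∀ m m' : ℕ, m < m' → rep x a m = rep x a m' → ∃ k, rep x a (k + 1) = x by
    obtain ⟨m, m', hne, heq⟩ := Finite.exists_ne_map_eq_of_infinite (f := rep x a)
    rcases hne.lt_or_gt with h' | h'
    · exact H _ _ h' heq
    · exact H _ _ h' heq.symm
  intro m m' hlt he
  obtain ⟨k, rfl⟩ : ∃ k, m' = m + (k + 1) := ⟨m' - m - 1, by omega⟩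
  rcases (greenL_iff.1 (greenL_rep x a h m)).2 with h0 | ⟨v, hv⟩
  · refine ⟨k, ?_⟩
    have h1 : rep x a (m + (k + 1)) = rep x a (k + 1) := by rw [rep_add x a m (k + 1), h0]
    rw [← h1, ← he]
    exact h0
  · refine ⟨k, ?_⟩
    calc rep x a (k + 1) = rep (v * rep x a m) a (k + 1) := by rw [hv]
      _ = v * rep (rep x a m) a (k + 1) := (rep_mul_left v _ a _).symm
      _ = v * rep x a (m + (k + 1)) := by rw [rep_add x a m (k + 1)]
      _ = v * rep x a m := by rw [← he]
      _ = x := hv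

variable (S : Subsemigroup U)

private def sIter (s : ↥S) : ℕ → ↥S
  | 0 => s
  | n + 1 => s * sIter s n

private lemma sIter_comm (s : ↥S) : ∀ n, sIter S s n * s = s * sIter S s n
  | 0 => rfl
  | n + 1 => by
    show (s * sIter S s n) * s = s * (s * sIter S s n)
    rw [mul_assoc, sIter_comm s n]

private lemma rep_sIter (x : U) (s : ↥S) : ∀ n, rep x (↑s) (n + 1) = x * ↑(sIter S s n)
  | 0 => rfl
  | n + 1 => by
    have hc : (↑(sIter S s n) : U) * ↑s = ↑s * ↑(sIter S s n) := by
      exact_mod_cast congrArg (fun t : ↥S => (t : U)) (sIter_comm S s n)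
    show rep x (↑s) (n + 1) * ↑s = x * ↑(s * sIter S s n)
    rw [rep_sIter x s n, mul_assoc, hc]
    push_cast
    rfl

private lemma stab_back [Finite U] {x : U} (o : Option ↥S)
    (h : GreenL (Set.univ : Set U) x (act1 S x o)) :
    ∃ p, act1 S (act1 S x o) p = x := by
  cases o with
  | none => exact ⟨none, rfl⟩
  | some s =>
    obtain ⟨k, hk⟩ := pump x (↑s) h
    cases k with
    | zero => exact ⟨none, hk⟩
    | succ j =>
      refine ⟨some (sIter S s j), ?_⟩
      show (x * ↑s) * ↑(sIter S s j) = x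
      rw [mul_assoc]
      have h1 : rep x (↑s : U) (j + 2) = x * (↑s * ↑(sIter S s j)) := by
        rw [rep_sIter S x s (j + 1)]
        show x * ↑(s * sIter S s j) = _
        push_cast
        rfl
      rw [← h1]
      exact hk

end Pump

section Core

variable [Semigroup U] (S : Subsemigroup U)

private lemma act1_fix {x : U} {q : Option ↥S} (h : act1 S x q = x) {z : U}
    (hz : z ∈ Lcl x) : act1 S z q = z := by
  rcases (greenL_iff.1 hz).1 with rfl | ⟨u, rfl⟩
  · exact h
  · rw [← mul_act1, h]

private lemma mem_stab [Finite U] {x : U} {o : Option ↥S}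
    (h : GreenL (Set.univ : Set U) x (act1 S x o)) : o ∈ StabOfL S x := by
  have hmaps : Set.MapsTo (fun y => act1 S y o) (Lcl x) (Lcl x) := by
    intro z hz
    exact greenL_trans h (greenL_act1 S o hz)
  have hinj : Set.InjOn (fun y => act1 S y o) (Lcl x) := by
    obtain ⟨p, hp⟩ := stab_back S o h
    rw [← act1_omul] at hp
    intro z1 h1 z2 h2 he
    calc z1 = act1 S z1 (omul S o p) := (act1_fix S hp h1).symm
      _ = act1 S (act1 S z1 o) p := act1_omul S z1 o p
      _ = act1 S (act1 S z2 o) p := by simp only at he; rw [he]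
      _ = act1 S z2 (omul S o p) := (act1_omul S z2 o p).symm
      _ = z2 := act1_fix S hp h2
  exact (((Set.toFinite (Lcl x)).injOn_iff_bijOn_of_mapsTo hmaps).1 hinj).image_eq

private lemma gamma_card [Finite U] (x : U) :
    ((fun (o : Option ↥S) => fun (z : ↥(Lcl x)) => act1 S (z : U) o) '' StabOfL S x).ncard
      = (Rcl (S : Set U) x ∩ Lcl x).ncard := by
  have hxx : x ∈ Lcl x := greenL_refl x
  set G := (fun (o : Option ↥S) => fun (z : ↥(Lcl x)) => act1 S (z : U) o) '' StabOfL S x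
    with hG
  set ev : (↥(Lcl x) → U) → U := fun g => g ⟨x, hxx⟩ with hev
  have hinj : Set.InjOn ev G := by
    rintro g1 ⟨o1, ho1, rfl⟩ g2 ⟨o2, ho2, rfl⟩ he
    simp only [hev] at he
    funext z
    obtain ⟨z, hz⟩ := z
    rcases (greenL_iff.1 hz).1 with rfl | ⟨u, rfl⟩
    · exact he
    · show act1 S (u * x) o1 = act1 S (u * x) o2
      rw [← mul_act1, ← mul_act1, he]
  have himg : ev '' G = Rcl (S : Set U) x ∩ Lcl x := by
    ext w
    constructor
    · rintro ⟨g, ⟨o, ho, rfl⟩, rfl⟩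
      show act1 S x o ∈ _
      have hw : act1 S x o ∈ Lcl x := ho ▸ Set.mem_image_of_mem _ hxx
      refine ⟨?_, hw⟩
      show GreenR (S : Set U) x (act1 S x o)
      rw [greenR_iff]
      exact ⟨⟨o, rfl⟩, stab_back S o hw⟩
    · rintro ⟨hwR, hwL⟩
      obtain ⟨⟨o, ho⟩, -⟩ := (greenR_iff S).1 hwR
      have hst : o ∈ StabOfL S x := mem_stab S (show GreenL _ x (act1 S x o) from ho ▸ hwL)
      exact ⟨_, ⟨o, hst, rfl⟩, ho⟩
  rw [← himg]
  exact (Set.ncard_image_of_injOn hinj).symm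

private lemma fiber_card [Finite U] {x z : U}
    (h1 : reachC (S : Set U) x z) (h2 : reachC (S : Set U) z x) :
    (Rcl (S : Set U) x ∩ Lcl z).ncard = (Rcl (S : Set U) x ∩ Lcl x).ncard := by
  obtain ⟨o, ho⟩ : ∃ o, Lcl (act1 S x o) = Lcl z := by
    rcases h1 with h | ⟨s, hs, h⟩
    · exact ⟨none, h⟩
    · exact ⟨some ⟨s, hs⟩, h⟩
  obtain ⟨t, ht⟩ : ∃ t, Lcl (act1 S z t) = Lcl x := by
    rcases h2 with h | ⟨s, hs, h⟩
    · exact ⟨none, h⟩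
    · exact ⟨some ⟨s, hs⟩, h⟩
  set y := act1 S x o with hy
  have hyz : GreenL (Set.univ : Set U) y z := greenL_of_Lcl_eq ho
  have hwx : GreenL (Set.univ : Set U) (act1 S y t) x :=
    greenL_trans (greenL_act1 S t hyz) (greenL_of_Lcl_eq ht)
  obtain ⟨p, hp⟩ := stab_back S (omul S o t)
    (by rw [act1_omul]; exact greenL_symm hwx)
  rw [act1_omul] at hp
  set r := omul S t p with hr
  have hyr : act1 S y r = x := by rw [hr, act1_omul]; exact hp
  have hxfix : act1 S x (omul S o r) = x := by rw [act1_omul]; exact hyr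
  have hyfix : act1 S y (omul S r o) = y := by rw [act1_omul, hyr]
  have hmapsφ : Set.MapsTo (fun v => act1 S v o) (Rcl (S : Set U) x ∩ Lcl x)
      (Rcl (S : Set U) x ∩ Lcl z) := by
    rintro v ⟨hvR, hvL⟩
    obtain ⟨hxv, hvx⟩ := (greenR_iff S).1 hvR
    constructor
    · show GreenR (S : Set U) x (act1 S v o)
      rw [greenR_iff]
      refine ⟨RE_trans S hxv ⟨o, rfl⟩, RE_trans S ?_ hvx⟩
      exact ⟨r, by rw [← act1_omul]; exact act1_fix S hxfix hvL⟩
    · exact greenL_trans (greenL_symm hyz) (greenL_act1 S o hvL)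
  have hmapsψ : Set.MapsTo (fun w => act1 S w r) (Rcl (S : Set U) x ∩ Lcl z)
      (Rcl (S : Set U) x ∩ Lcl x) := by
    rintro w ⟨hwR, hwL⟩
    have hwLy : GreenL (Set.univ : Set U) y w := greenL_trans hyz hwL
    obtain ⟨hxw, hwx⟩ := (greenR_iff S).1 hwR
    constructor
    · show GreenR (S : Set U) x (act1 S w r)
      rw [greenR_iff]
      refine ⟨RE_trans S hxw ⟨r, rfl⟩, RE_trans S ?_ hwx⟩
      exact ⟨o, by rw [← act1_omul]; exact act1_fix S hyfix hwLy⟩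
    · have := greenL_act1 S r hwLy
      rw [hyr] at this
      exact this
  have hinv : Set.InvOn (fun w => act1 S w r) (fun v => act1 S v o)
      (Rcl (S : Set U) x ∩ Lcl x) (Rcl (S : Set U) x ∩ Lcl z) := by
    constructor
    · rintro v ⟨-, hvL⟩
      show act1 S (act1 S v o) r = v
      rw [← act1_omul]
      exact act1_fix S hxfix hvL
    · rintro w ⟨-, hwL⟩
      show act1 S (act1 S w r) o = w
      rw [← act1_omul]
      exact act1_fix S hyfix (greenL_trans hyz hwL)
  have hbij := hinv.bijOn hmapsφ hmapsψ
  rw [← hbij.image_eq]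
  exact Set.ncard_image_of_injOn hbij.injOn

end Core

/-- For `x, y ∈ S` regular in `U`: if `x R^S y` then `|R_x^S| = |R_y^S|`;
moreover `|R_x^S|` equals the order of the group `S_{L_x^U}` (realised as the
set of maps induced on `L_x^U` by the stabiliser `Stab_S(L_x^U)`) multiplied by
the number of `L^U`-classes in the strongly connected component of `L_x^U` under
the right action of `S` on `{L_z^U : z ∈ S}`. -/
theorem card_rclass_eq [Semigroup U] [Finite U] (S : Subsemigroup U)
    (x y : U) (hx : x ∈ S) (hy : y ∈ S)
    (hxreg : ∃ x' : U, x * x' * x = x) (hyreg : ∃ y' : U, y * y' * y = y) :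
    (GreenR (S : Set U) x y → (Rcl (S : Set U) x).ncard = (Rcl (S : Set U) y).ncard) ∧
    (Rcl (S : Set U) x).ncard =
      ((fun (o : Option ↥S) => fun (z : ↥(Lcl x)) => act1 S (z : U) o) ''
          StabOfL S x).ncard *
        {B : Set U | ∃ z ∈ (S : Set U), B = Lcl z ∧
          reachC (S : Set U) x z ∧ reachC (S : Set U) z x}.ncard := by
  classical
  have := Fintype.ofFinite U
  constructor
  · intro hxy
    obtain ⟨hxy1, hyx1⟩ := (greenR_iff S).1 hxy
    have hEq : Rcl (S : Set U) x = Rcl (S : Set U) y := by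
      ext w
      show GreenR (S : Set U) x w ↔ GreenR (S : Set U) y w
      rw [greenR_iff, greenR_iff]
      exact ⟨fun h => ⟨RE_trans S hyx1 h.1, RE_trans S h.2 hxy1⟩,
             fun h => ⟨RE_trans S hxy1 h.1, RE_trans S h.2 hyx1⟩⟩
    rw [hEq]
  · letI : Fintype (Set U) := Fintype.ofFinite _
    set R := Rcl (S : Set U) x with hR
    set C := {B : Set U | ∃ z ∈ (S : Set U), B = Lcl z ∧
        reachC (S : Set U) x z ∧ reachC (S : Set U) z x} with hC
    have hfR : R.Finite := Set.toFinite R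
    have hfC : C.Finite := Set.toFinite C
    have hmem : ∀ w ∈ hfR.toFinset, Lcl w ∈ hfC.toFinset := by
      intro w hw
      rw [Set.Finite.mem_toFinset] at hw ⊢
      have hw' : GreenR (S : Set U) x w := hw
      obtain ⟨hxw, hwx⟩ := (greenR_iff S).1 hw'
      refine ⟨w, mem_S_of_RE S hx hxw, rfl, ?_, ?_⟩
      · obtain ⟨o, ho⟩ := hxw
        cases o with
        | none => exact Or.inl (by rw [show x = w from ho])
        | some s => exact Or.inr ⟨↑s, s.2, by rw [show x * ↑s = w from ho]⟩
      · obtain ⟨p, hp⟩ := hwx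
        cases p with
        | none => exact Or.inl (by rw [show w = x from hp])
        | some s => exact Or.inr ⟨↑s, s.2, by rw [show w * ↑s = x from hp]⟩
    have hsum := Finset.card_eq_sum_card_fiberwise hmem
    have hfiber : ∀ B ∈ hfC.toFinset, (hfR.toFinset.filter (fun w => Lcl w = B)).card
        = (R ∩ Lcl x).ncard := by
      intro B hB
      rw [Set.Finite.mem_toFinset] at hB
      obtain ⟨z, hzS, rfl, hzr1, hzr2⟩ := hB
      have hset : ((hfR.toFinset.filter (fun w => Lcl w = Lcl z)) : Set U) = R ∩ Lcl z := by
        ext w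
        simp only [Finset.coe_filter, Set.mem_setOf_eq, Set.Finite.mem_toFinset,
          Set.mem_inter_iff]
        constructor
        · rintro ⟨h1, h2⟩
          exact ⟨h1, greenL_of_Lcl_eq h2.symm⟩
        · rintro ⟨h1, h2⟩
          exact ⟨h1, (Lcl_eq_of_greenL h2).symm⟩
      calc (hfR.toFinset.filter (fun w => Lcl w = Lcl z)).card
          = ((hfR.toFinset.filter (fun w => Lcl w = Lcl z)) : Set U).ncard :=
            (Set.ncard_coe_finset _).symm
        _ = (R ∩ Lcl z).ncard := by rw [hset]
        _ = (R ∩ Lcl x).ncard := fiber_card S hzr1 hzr2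
    have hcard : R.ncard = hfR.toFinset.card := Set.ncard_eq_toFinset_card R hfR
    have hCcard : C.ncard = hfC.toFinset.card := Set.ncard_eq_toFinset_card C hfC
    rw [hcard, hsum, Finset.sum_congr rfl hfiber, Finset.sum_const, smul_eq_mul,
      gamma_card S x, hCcard, mul_comm]
end

section
/- Let U be a finite semigroup, S a subsemigroup, x ∈ S with x' ∈ U satisfying x x' x = x. Then D_x^S ∩ H_x^U = {s x t : s ∈ Stab_S(R_x^U), t ∈ Stab_S(L_x^U)}. -/
variable {U : Type*}

section AuxLemmas

variable {V : Type*} [Semigroup V]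

/-- `pw a k = a^(k+1)` (semigroups have no `npow`). -/
private def pw (a : V) : ℕ → V
  | 0 => a
  | k+1 => pw a k * a

private lemma pw_mem {S : Subsemigroup V} {a : V} (ha : a ∈ S) : ∀ k, pw a k ∈ S
  | 0 => ha
  | k+1 => S.mul_mem (pw_mem ha k) ha

private lemma iterR (a y : V) : ∀ k, (fun z => z * a)^[k+1] y = y * pw a k
  | 0 => rfl
  | k+1 => by
    rw [Function.iterate_succ_apply', iterR a y k]
    show y * pw a k * a = y * (pw a k * a)
    rw [mul_assoc]

private lemma pw_swap (a : V) : ∀ k, a * pw a k = pw a k * a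
  | 0 => rfl
  | k+1 => by
    show a * (pw a k * a) = (pw a k * a) * a
    rw [← mul_assoc, pw_swap a k]

private lemma iterL (a y : V) : ∀ k, (fun z => a * z)^[k+1] y = pw a k * y
  | 0 => rfl
  | k+1 => by
    rw [Function.iterate_succ_apply', iterL a y k]
    show a * (pw a k * y) = (pw a k * a) * y
    rw [← mul_assoc, pw_swap]

private lemma exists_iterate_fix {W : Type*} [Finite W] {f : W → W} {A : Set W}
    (h : f '' A = A) : ∃ k : ℕ, ∀ y ∈ A, f^[k+1] y = y := by
  have hmaps : ∀ y ∈ A, f y ∈ A := fun y hy => h ▸ Set.mem_image_of_mem f hy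
  let g : A → A := fun y => ⟨f y, hmaps y y.2⟩
  have hsurj : Function.Surjective g := by
    intro z
    have hz : (z : W) ∈ f '' A := by rw [h]; exact z.2
    obtain ⟨y, hy, hfy⟩ := hz
    exact ⟨⟨y, hy⟩, Subtype.ext hfy⟩
  have hinj : Function.Injective g := Finite.injective_iff_surjective.2 hsurj
  have hval : ∀ (k : ℕ) (y : A), (g^[k] y : W) = f^[k] (y : W) := by
    intro k
    induction k with
    | zero => intro y; rfl
    | succ k ih =>
      intro y
      rw [Function.iterate_succ_apply', Function.iterate_succ_apply']
      show f (g^[k] y : W) = f (f^[k] (y : W))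
      rw [ih]
  have main : ∀ i j : ℕ, i < j → g^[i] = g^[j] → ∃ k : ℕ, ∀ y ∈ A, f^[k+1] y = y := by
    intro i j hlt he
    obtain ⟨d, rfl⟩ : ∃ d, j = i + (d + 1) := ⟨j - i - 1, by omega⟩
    refine ⟨d, fun y hy => ?_⟩
    have hI : Function.Injective g^[i] := Function.Injective.iterate hinj i
    have hcongr := congrFun he ⟨y, hy⟩
    rw [Function.iterate_add_apply] at hcongr
    have hg : g^[d+1] ⟨y, hy⟩ = ⟨y, hy⟩ := (hI hcongr).symm
    have := congrArg (Subtype.val) hg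
    rw [hval] at this
    exact this
  obtain ⟨i, j, hij, hgij⟩ := Finite.exists_ne_map_eq_of_infinite (fun k : ℕ => g^[k])
  rcases lt_or_gt_of_ne hij with h | h
  · exact main i j h hgij
  · exact main j i h hgij.symm

private lemma stepL {x y z : V}
    (h1 : x = y ∨ ∃ a ∈ (Set.univ : Set V), a * x = y)
    (h2 : y = z ∨ ∃ a ∈ (Set.univ : Set V), a * y = z) :
    x = z ∨ ∃ a ∈ (Set.univ : Set V), a * x = z := by
  rcases h1 with rfl | ⟨u, -, rfl⟩
  · exact h2
  · rcases h2 with rfl | ⟨v, -, rfl⟩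
    · exact Or.inr ⟨u, trivial, rfl⟩
    · exact Or.inr ⟨v * u, trivial, mul_assoc v u x⟩

private lemma stepR {x y z : V}
    (h1 : x = y ∨ ∃ a ∈ (Set.univ : Set V), x * a = y)
    (h2 : y = z ∨ ∃ a ∈ (Set.univ : Set V), y * a = z) :
    x = z ∨ ∃ a ∈ (Set.univ : Set V), x * a = z := by
  rcases h1 with rfl | ⟨u, -, rfl⟩
  · exact h2
  · rcases h2 with rfl | ⟨v, -, rfl⟩
    · exact Or.inr ⟨u, trivial, rfl⟩
    · exact Or.inr ⟨u * v, trivial, (mul_assoc x u v).symm⟩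

private lemma greenL_mono {T : Set V} {x y : V} (h : GreenL T x y) :
    GreenL Set.univ x y := by
  obtain ⟨h1, h2⟩ := h
  constructor
  · rcases h1 with rfl | ⟨a, -, ha⟩
    · exact Or.inl rfl
    · exact Or.inr ⟨a, trivial, ha⟩
  · rcases h2 with rfl | ⟨a, -, ha⟩
    · exact Or.inl rfl
    · exact Or.inr ⟨a, trivial, ha⟩

private lemma greenR_mono {T : Set V} {x y : V} (h : GreenR T x y) :
    GreenR Set.univ x y := by
  obtain ⟨h1, h2⟩ := h
  constructor
  · rcases h1 with rfl | ⟨a, -, ha⟩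
    · exact Or.inl rfl
    · exact Or.inr ⟨a, trivial, ha⟩
  · rcases h2 with rfl | ⟨a, -, ha⟩
    · exact Or.inl rfl
    · exact Or.inr ⟨a, trivial, ha⟩

private lemma greenL_symm_s14 {T : Set V} {x y : V} (h : GreenL T x y) : GreenL T y x :=
  ⟨h.2, h.1⟩

private lemma greenL_univ_trans {x y z : V} (h1 : GreenL Set.univ x y)
    (h2 : GreenL Set.univ y z) : GreenL Set.univ x z :=
  ⟨stepL h1.1 h2.1, stepL h2.2 h1.2⟩

private lemma greenR_univ_trans {x y z : V} (h1 : GreenR Set.univ x y)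
    (h2 : GreenR Set.univ y z) : GreenR Set.univ x z :=
  ⟨stepR h1.1 h2.1, stepR h2.2 h1.2⟩

private lemma Lcl_eq_of {x y : V} (h : GreenL Set.univ x y) : Lcl x = Lcl y :=
  Set.ext fun z =>
    ⟨fun hz => greenL_univ_trans (greenL_symm_s14 h) hz, fun hz => greenL_univ_trans h hz⟩

private lemma RclU_eq_of {x y : V} (h : GreenR Set.univ x y) : RclU x = RclU y := by
  have hsymm : GreenR Set.univ y x := ⟨h.2, h.1⟩
  exact Set.ext fun z =>
    ⟨fun hz => greenR_univ_trans hsymm hz, fun hz => greenR_univ_trans h hz⟩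

/-- Green's lemma, right-translation version. -/
private lemma image_mul_right_Lcl {x a b : V} (h : x * a * b = x) :
    (fun y => y * a) '' Lcl x = Lcl (x * a) := by
  ext z
  constructor
  · rintro ⟨y, hy, rfl⟩
    obtain ⟨h1, h2⟩ := hy
    constructor
    · rcases h1 with rfl | ⟨u, -, rfl⟩
      · exact Or.inl rfl
      · exact Or.inr ⟨u, trivial, (mul_assoc u x a).symm⟩
    · rcases h2 with rfl | ⟨v, -, hv⟩
      · exact Or.inl rfl
      · exact Or.inr ⟨v, trivial, by rw [← mul_assoc, hv]⟩
  · intro hz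
    obtain ⟨h1, h2⟩ := hz
    rcases h1 with rfl | ⟨u, -, rfl⟩
    · exact ⟨x * a * b, by rw [h]; exact ⟨Or.inl rfl, Or.inl rfl⟩, by show x*a*b*a = x*a; rw [h]⟩
    · have hzb : (u * (x * a)) * b = u * x := by rw [mul_assoc]; rw [show x * a * b = x from h]
      refine ⟨u * (x * a) * b, ?_, ?_⟩
      · rw [hzb]
        rcases h2 with heq | ⟨v, -, hv⟩
        · -- u * (x*a) = x*a ; then u*x = (u*(x*a))*b = (x*a)*b = x
          have : u * x = x := by rw [← hzb, heq, h]
          exact ⟨Or.inr ⟨u, trivial, rfl⟩, Or.inl this⟩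
        · -- v * (u * (x*a)) = x*a
          refine ⟨Or.inr ⟨u, trivial, rfl⟩, Or.inr ⟨v, trivial, ?_⟩⟩
          rw [← hzb, ← mul_assoc, hv, h]
      · show (u * (x * a) * b) * a = u * (x * a)
        rw [hzb, mul_assoc]

/-- Green's lemma, left-translation version. -/
private lemma image_mul_left_Rcl {x a b : V} (h : b * (a * x) = x) :
    (fun y => a * y) '' RclU x = RclU (a * x) := by
  ext z
  constructor
  · rintro ⟨y, hy, rfl⟩
    obtain ⟨h1, h2⟩ := hy
    constructor
    · rcases h1 with rfl | ⟨u, -, rfl⟩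
      · exact Or.inl rfl
      · exact Or.inr ⟨u, trivial, mul_assoc a x u⟩
    · rcases h2 with rfl | ⟨v, -, hv⟩
      · exact Or.inl rfl
      · exact Or.inr ⟨v, trivial, by rw [mul_assoc, hv]⟩
  · intro hz
    obtain ⟨h1, h2⟩ := hz
    rcases h1 with rfl | ⟨u, -, rfl⟩
    · exact ⟨b * (a * x), by rw [h]; exact ⟨Or.inl rfl, Or.inl rfl⟩,
        by show a * (b * (a * x)) = a * x; rw [h]⟩
    · have hzb : b * ((a * x) * u) = x * u := by
        rw [← mul_assoc]; rw [show b * (a * x) = x from h]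
      refine ⟨b * ((a * x) * u), ?_, ?_⟩
      · rw [hzb]
        rcases h2 with heq | ⟨v, -, hv⟩
        · have : x * u = x := by rw [← hzb, heq, h]
          exact ⟨Or.inr ⟨u, trivial, rfl⟩, Or.inl this⟩
        · refine ⟨Or.inr ⟨u, trivial, rfl⟩, Or.inr ⟨v, trivial, ?_⟩⟩
          rw [← hzb, mul_assoc, hv, h]
      · show a * (b * ((a * x) * u)) = (a * x) * u
        rw [hzb, ← mul_assoc]

private lemma act1_assoc {V : Type*} [Semigroup V] (S : Subsemigroup V)
    (s t : Option ↥S) (x : V) :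
    act1 S (act1L S s x) t = act1L S s (act1 S x t) := by
  cases s <;> cases t <;> simp [act1, act1L, mul_assoc]

private lemma stabL_prop {V : Type*} [Semigroup V] [Finite V] {S : Subsemigroup V} {x : V}
    {t : Option ↥S} (ht : t ∈ StabOfL S x) :
    ∀ y ∈ Lcl x, act1 S y t ∈ Lcl x ∧ GreenR (S : Set V) y (act1 S y t) := by
  match t with
  | none => exact fun y hy => ⟨hy, Or.inl rfl, Or.inl rfl⟩
  | some a =>
    have himg : (fun y => y * (a : V)) '' Lcl x = Lcl x := ht
    obtain ⟨k, hk⟩ := exists_iterate_fix himg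
    intro y hy
    have hmem : y * (a : V) ∈ Lcl x := by
      rw [← himg]; exact Set.mem_image_of_mem _ hy
    refine ⟨hmem, Or.inr ⟨(a : V), a.2, rfl⟩, ?_⟩
    cases k with
    | zero => exact Or.inl (hk y hy)
    | succ j =>
      refine Or.inr ⟨pw (a : V) j, pw_mem a.2 j, ?_⟩
      have hfix := hk y hy
      rw [Function.iterate_succ_apply, iterR] at hfix
      exact hfix

private lemma stabR_prop {V : Type*} [Semigroup V] [Finite V] {S : Subsemigroup V} {x : V}
    {s : Option ↥S} (hs : s ∈ StabOfR S x) :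
    ∀ y ∈ RclU x, act1L S s y ∈ RclU x ∧ GreenL (S : Set V) y (act1L S s y) := by
  match s with
  | none => exact fun y hy => ⟨hy, Or.inl rfl, Or.inl rfl⟩
  | some c =>
    have himg : (fun y => (c : V) * y) '' RclU x = RclU x := hs
    obtain ⟨k, hk⟩ := exists_iterate_fix himg
    intro y hy
    have hmem : (c : V) * y ∈ RclU x := by
      rw [← himg]; exact Set.mem_image_of_mem _ hy
    refine ⟨hmem, Or.inr ⟨(c : V), c.2, rfl⟩, ?_⟩
    cases k with
    | zero => exact Or.inl (hk y hy)
    | succ j =>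
      refine Or.inr ⟨pw (c : V) j, pw_mem c.2 j, ?_⟩
      have hfix := hk y hy
      rw [Function.iterate_succ_apply, iterL] at hfix
      exact hfix

end AuxLemmas

/-- If `x ∈ S` and `x' ∈ U` satisfies `x x' x = x`, then
`D_x^S ∩ H_x^U = {s x t : s ∈ Stab_S(R_x^U), t ∈ Stab_S(L_x^U)}`. -/
theorem dclass_inter_hclassU_eq [Semigroup U] [Finite U] (S : Subsemigroup U)
    (x : U) (hx : x ∈ S) (x' : U) (hx' : x * x' * x = x) :
    {w | GreenD (S : Set U) x w ∧ GreenH (Set.univ : Set U) x w} =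
      {w | ∃ s ∈ StabOfR S x, ∃ t ∈ StabOfL S x, w = act1 S (act1L S s x) t} := by
  ext w
  simp only [Set.mem_setOf_eq]
  constructor
  · rintro ⟨⟨z, hxz, hzw⟩, hLw, hRw⟩
    have hzRx : GreenR Set.univ x z := greenR_mono hxz
    have hzLx : GreenL Set.univ x z :=
      greenL_univ_trans hLw (greenL_symm_s14 (greenL_mono hzw))
    by_cases hzx : z = x
    · subst hzx
      by_cases hwz : w = z
      · subst hwz
        exact ⟨none, Set.image_id' _, none, Set.image_id' _, rfl⟩
      · obtain ⟨g1, g2⟩ := hzw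
        rcases g1 with heq | ⟨c, hc, rfl⟩
        · exact absurd heq.symm hwz
        rcases g2 with heq | ⟨d, hd, hdw⟩
        · exact absurd heq hwz
        refine ⟨some ⟨c, hc⟩, ?_, none, Set.image_id' _, rfl⟩
        show (fun y => c * y) '' RclU z = RclU z
        rw [image_mul_left_Rcl hdw]
        exact (RclU_eq_of hRw).symm
    · obtain ⟨h1, h2⟩ := hxz
      rcases h1 with heq | ⟨a, ha, rfl⟩
      · exact absurd heq.symm hzx
      rcases h2 with heq | ⟨b, hb, hba⟩
      · exact absurd heq hzx
      have hstabt : (fun y => y * a) '' Lcl x = Lcl x := by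
        rw [image_mul_right_Lcl hba]
        exact (Lcl_eq_of hzLx).symm
      by_cases hwz : w = x * a
      · exact ⟨none, Set.image_id' _, some ⟨a, ha⟩, hstabt, hwz⟩
      · obtain ⟨g1, g2⟩ := hzw
        rcases g1 with heq | ⟨c, hc, rfl⟩
        · exact absurd heq.symm hwz
        rcases g2 with heq | ⟨d, hd, hdw⟩
        · exact absurd heq hwz
        refine ⟨some ⟨c, hc⟩, ?_, some ⟨a, ha⟩, hstabt, (mul_assoc c x a).symm⟩
        show (fun y => c * y) '' RclU x = RclU x
        rw [RclU_eq_of hzRx, image_mul_left_Rcl hdw]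
        exact (RclU_eq_of hRw).symm.trans (RclU_eq_of hzRx)
  · rintro ⟨s, hs, t, ht, rfl⟩
    have hxL : x ∈ Lcl x := ⟨Or.inl rfl, Or.inl rfl⟩
    have hxR : x ∈ RclU x := ⟨Or.inl rfl, Or.inl rfl⟩
    obtain ⟨hzL, hRz⟩ := stabL_prop ht x hxL
    have hzR : act1 S x t ∈ RclU x := greenR_mono hRz
    obtain ⟨hwR, hLw⟩ := stabR_prop hs _ hzR
    obtain ⟨hsxR, hLsx⟩ := stabR_prop hs x hxR
    have hsxL : act1L S s x ∈ Lcl x := greenL_mono hLsx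
    obtain ⟨hwL, -⟩ := stabL_prop ht _ hsxL
    have hassoc : act1 S (act1L S s x) t = act1L S s (act1 S x t) := act1_assoc S s t x
    refine ⟨⟨act1 S x t, hRz, ?_⟩, ?_, ?_⟩
    · rw [hassoc]; exact hLw
    · exact hwL
    · show GreenR Set.univ x (act1 S (act1L S s x) t)
      rw [hassoc]; exact hwR
end
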